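/- arXiv:2501.03834 — 4 statements merged into one kernel-verified Lean document; each statement's English description precedes it below -/
import Mathlib

section
/- Let r be a point on the image of R and let b be a nearest neighbor of r on B. Let γ be a continuous path in P from r to b whose length equals d(r, b) (a geodesic from r to b). Then for every point r' on the image of R and every point b' on the image of B such that r' and b' lie in different connected components of P \ (image of γ), one has d(r', b) ≤ d(r', b'). -/
open Set

noncomputable section

abbrev E2 := EuclideanSpace ℝ (Fin 2)

/-- `R` is piecewise affine on `[0,1]` with finitely many breakpoints. -/
def IsPiecewiseAffine (R : ℝ → E2) : Prop :=
  ∃ (k : ℕ) (t : ℕ → ℝ), 0 < k ∧ t 0 = 0 ∧ t k = 1 ∧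
    (∀ i < k, t i < t (i + 1)) ∧
    ∀ i < k, ∀ x ∈ Icc (t i) (t (i + 1)),
      R x = R (t i) + ((x - t i) / (t (i + 1) - t i)) • (R (t (i + 1)) - R (t i))

/-- The two simple polygonal curves bound a simple polygon: continuous, piecewise
affine, injective, sharing exactly their common endpoints. -/
def SimplePolygonalPair (R B : ℝ → E2) : Prop :=
  ContinuousOn R (Icc 0 1) ∧ ContinuousOn B (Icc 0 1) ∧
  IsPiecewiseAffine R ∧ IsPiecewiseAffine B ∧
  InjOn R (Icc 0 1) ∧ InjOn B (Icc 0 1) ∧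
  R 0 = B 0 ∧ R 1 = B 1 ∧
  (R '' Icc 0 1) ∩ (B '' Icc 0 1) = {R 0, R 1}

/-- The image of the Jordan curve formed by `R` and the reverse of `B`. -/
def jordanImage (R B : ℝ → E2) : Set E2 := R '' Icc 0 1 ∪ B '' Icc 0 1

/-- The simple polygon bounded by `R` and `B`: the Jordan curve together with the
bounded connected components of its complement. -/
def polygonOf (R B : ℝ → E2) : Set E2 :=
  jordanImage R B ∪
    {x | x ∉ jordanImage R B ∧
      Bornology.IsBounded (connectedComponentIn (jordanImage R B)ᶜ x)}

/-- Length (total variation) of a path parameterized over `[0,1]`. -/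
def pathLength (γ : ℝ → E2) : ENNReal := eVariationOn γ (Icc 0 1)

/-- Geodesic distance inside `P`: infimum of lengths of continuous paths in `P`. -/
def geodDist (P : Set E2) (p q : E2) : ℝ :=
  (⨅ γ : {γ : ℝ → E2 // ContinuousOn γ (Icc 0 1) ∧ γ 0 = p ∧ γ 1 = q ∧
      γ '' Icc 0 1 ⊆ P}, pathLength γ.1).toReal

/-- A reparameterization: a nondecreasing surjection of `[0,1]` onto `[0,1]`. -/
def IsRepar (f : ℝ → ℝ) : Prop :=
  MonotoneOn f (Icc 0 1) ∧ MapsTo f (Icc 0 1) (Icc 0 1) ∧ SurjOn f (Icc 0 1) (Icc 0 1)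

/-- The cost of a matching `(f, g)`. -/
def matchingCost (P : Set E2) (R B : ℝ → E2) (f g : ℝ → ℝ) : ℝ :=
  sSup {c : ℝ | ∃ t ∈ Icc (0:ℝ) 1, c = geodDist P (R (f t)) (B (g t))}

/-- The geodesic Fréchet distance between `R` and `B` with geodesics in `P`. -/
def frechetDist (P : Set E2) (R B : ℝ → E2) : ℝ :=
  sInf {c : ℝ | ∃ f g : ℝ → ℝ, IsRepar f ∧ IsRepar g ∧ c = matchingCost P R B f g}

/-- A `δ`-matching: a matching of cost at most `δ`. -/
def IsDeltaMatching (P : Set E2) (R B : ℝ → E2) (δ : ℝ) (f g : ℝ → ℝ) : Prop :=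
  IsRepar f ∧ IsRepar g ∧ ∀ t ∈ Icc (0:ℝ) 1, geodDist P (R (f t)) (B (g t)) ≤ δ

/-- `b` is a nearest neighbor of `r` among the points of `B`. -/
def IsNearestNeighbor (P : Set E2) (B : ℝ → E2) (r b : E2) : Prop :=
  b ∈ B '' Icc (0:ℝ) 1 ∧ ∀ b' ∈ B '' Icc (0:ℝ) 1, geodDist P r b ≤ geodDist P r b'

/-! ### Auxiliary development for the proof -/

namespace GeodAux

/-- The extended-real geodesic distance (the infimum before `toReal`). -/
def eGeod (P : Set E2) (p q : E2) : ENNReal :=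
  ⨅ γ : {γ : ℝ → E2 // ContinuousOn γ (Icc 0 1) ∧ γ 0 = p ∧ γ 1 = q ∧
      γ '' Icc 0 1 ⊆ P}, pathLength γ.1

set_option maxHeartbeats 1000000 in
lemma eGeod_def (P : Set E2) (p q : E2) : eGeod P p q =
    ⨅ γ : {γ : ℝ → E2 // ContinuousOn γ (Icc 0 1) ∧ γ 0 = p ∧ γ 1 = q ∧
      γ '' Icc 0 1 ⊆ P}, pathLength γ.1 := rfl

set_option maxHeartbeats 1000000 in
lemma geodDist_eq (P : Set E2) (p q : E2) : geodDist P p q = (eGeod P p q).toReal := by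
  unfold geodDist eGeod
  rfl

lemma eGeod_le (P : Set E2) {p q : E2} (σ : ℝ → E2) (h₁ : ContinuousOn σ (Icc 0 1))
    (h₂ : σ 0 = p) (h₃ : σ 1 = q) (h₄ : σ '' Icc 0 1 ⊆ P) :
    eGeod P p q ≤ pathLength σ := by
  unfold eGeod
  exact iInf_le (fun γ : {γ : ℝ → E2 // ContinuousOn γ (Icc 0 1) ∧ γ 0 = p ∧ γ 1 = q ∧
      γ '' Icc 0 1 ⊆ P} => pathLength γ.1) ⟨σ, h₁, h₂, h₃, h₄⟩

/-- The subpath of a path bounds the geodesic distance between intermediate points. -/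
lemma eGeod_subpath (P : Set E2) {σ : ℝ → E2} (hc : ContinuousOn σ (Icc 0 1))
    (him : σ '' Icc 0 1 ⊆ P) {u v : ℝ} (hu : u ∈ Icc (0:ℝ) 1) (hv : v ∈ Icc (0:ℝ) 1) :
    eGeod P (σ u) (σ v) ≤ eVariationOn σ (uIcc u v) := by
  set φ : ℝ → ℝ := fun t => u + t * (v - u) with hφdef
  have hφ0 : φ 0 = u := by simp [hφdef]
  have hφ1 : φ 1 = v := by simp [hφdef]
  have hmaps : MapsTo φ (Icc 0 1) (uIcc u v) := by
    rcases le_total u v with h | h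
    · rw [uIcc_of_le h]
      rintro t ⟨h0, h1⟩
      refine ⟨?_, ?_⟩ <;> simp only [hφdef] <;> nlinarith
    · rw [uIcc_of_ge h]
      rintro t ⟨h0, h1⟩
      refine ⟨?_, ?_⟩ <;> simp only [hφdef] <;> nlinarith
  have h01 : Icc (0:ℝ) 1 = uIcc 0 1 := (uIcc_of_le zero_le_one).symm
  have huIcc : uIcc u v ⊆ Icc (0:ℝ) 1 := by
    rw [h01]
    exact uIcc_subset_uIcc (h01 ▸ hu) (h01 ▸ hv)
  have hmaps' : MapsTo φ (Icc 0 1) (Icc 0 1) := hmaps.mono_right huIcc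
  have hφc : ContinuousOn φ (Icc 0 1) := (continuous_const.add
    (continuous_id.mul continuous_const)).continuousOn
  have hcomp_c : ContinuousOn (σ ∘ φ) (Icc 0 1) := hc.comp hφc hmaps'
  have hcomp_im : (σ ∘ φ) '' Icc 0 1 ⊆ P := by
    rw [image_comp]
    exact (image_mono (hmaps'.image_subset)).trans him
  have hlen : pathLength (σ ∘ φ) ≤ eVariationOn σ (uIcc u v) := by
    rcases le_total u v with h | h
    · have hmono : MonotoneOn φ (Icc 0 1) := by
        intro a _ c _ hac
        simp only [hφdef]
        nlinarith
      exact eVariationOn.comp_le_of_monotoneOn σ φ hmono hmaps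
    · have hanti : AntitoneOn φ (Icc 0 1) := by
        intro a _ c _ hac
        simp only [hφdef]
        nlinarith
      exact eVariationOn.comp_le_of_antitoneOn σ φ hanti hmaps
  calc eGeod P (σ u) (σ v) ≤ pathLength (σ ∘ φ) := by
        refine eGeod_le P (σ ∘ φ) hcomp_c ?_ ?_ hcomp_im
        · simp [Function.comp, hφ0]
        · simp [Function.comp, hφ1]
    _ ≤ eVariationOn σ (uIcc u v) := hlen

/-- Concatenation: `eGeod` is bounded by the sum of lengths of two concatenated paths. -/
lemma eGeod_le_concat (P : Set E2) {p x q : E2} {γ₁ γ₂ : ℝ → E2}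
    (h₁c : ContinuousOn γ₁ (Icc 0 1)) (h₁0 : γ₁ 0 = p) (h₁1 : γ₁ 1 = x)
    (h₁P : γ₁ '' Icc 0 1 ⊆ P)
    (h₂c : ContinuousOn γ₂ (Icc 0 1)) (h₂0 : γ₂ 0 = x) (h₂1 : γ₂ 1 = q)
    (h₂P : γ₂ '' Icc 0 1 ⊆ P) :
    eGeod P p q ≤ pathLength γ₁ + pathLength γ₂ := by
  classical
  set σ : ℝ → E2 := fun t => if t ≤ 1/2 then γ₁ (2*t) else γ₂ (2*t - 1) with hσdef
  have hset1 : {a : ℝ | a ≤ 1/2} = Iic (1/2) := rfl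
  have hset2 : {a : ℝ | ¬ a ≤ 1/2} = Ioi (1/2) := by ext a; simp [not_le]
  have hm1 : MapsTo (fun t : ℝ => 2*t) (Icc 0 (1/2)) (Icc 0 1) := by
    rintro t ⟨h0, h1⟩; refine ⟨?_, ?_⟩ <;> dsimp only <;> linarith
  have hm2 : MapsTo (fun t : ℝ => 2*t - 1) (Icc (1/2) 1) (Icc 0 1) := by
    rintro t ⟨h0, h1⟩; refine ⟨?_, ?_⟩ <;> dsimp only <;> linarith
  have hf1 : ContinuousOn (fun t : ℝ => γ₁ (2*t)) (Icc 0 (1/2)) :=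
    h₁c.comp (continuous_const.mul continuous_id).continuousOn hm1
  have hf2 : ContinuousOn (fun t : ℝ => γ₂ (2*t - 1)) (Icc (1/2) 1) :=
    h₂c.comp ((continuous_const.mul continuous_id).sub continuous_const).continuousOn hm2
  have hσc : ContinuousOn σ (Icc 0 1) := by
    apply ContinuousOn.if
    · intro a ha
      rw [hset1, frontier_Iic] at ha
      have : a = 1/2 := ha.2
      subst this
      norm_num [h₁1, h₂0]
    · rw [hset1, (isClosed_Iic.closure_eq)]
      refine hf1.mono ?_
      rintro t ⟨⟨h0, _⟩, h1⟩; exact ⟨h0, h1⟩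
    · rw [hset2, closure_Ioi]
      refine hf2.mono ?_
      rintro t ⟨⟨_, h1⟩, h0⟩; exact ⟨h0, h1⟩
  have hσ0 : σ 0 = p := by norm_num [hσdef, h₁0]
  have hσ1 : σ 1 = q := by norm_num [hσdef, h₂1]
  have hσP : σ '' Icc 0 1 ⊆ P := by
    rintro _ ⟨t, ⟨h0, h1⟩, rfl⟩
    by_cases h : t ≤ 1/2
    · have : σ t = γ₁ (2*t) := if_pos h
      rw [this]
      exact h₁P (mem_image_of_mem _ ⟨by linarith, by linarith⟩)
    · have : σ t = γ₂ (2*t - 1) := if_neg h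
      rw [this]
      push_neg at h
      exact h₂P (mem_image_of_mem _ ⟨by linarith, by linarith⟩)
  have hsplit : eVariationOn σ (Icc 0 (1/2)) + eVariationOn σ (Icc (1/2) 1)
      = eVariationOn σ (Icc 0 1) := by
    have := eVariationOn.Icc_add_Icc σ (s := univ) (a := (0:ℝ)) (b := 1/2) (c := 1)
      (by norm_num) (by norm_num) (mem_univ _)
    simpa using this
  have hv1 : eVariationOn σ (Icc 0 (1/2)) ≤ pathLength γ₁ := by
    have heq : EqOn σ (γ₁ ∘ fun t : ℝ => 2*t) (Icc 0 (1/2)) := by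
      rintro t ⟨_, h1⟩
      exact if_pos h1
    rw [eVariationOn.eq_of_eqOn heq]
    have hmono : MonotoneOn (fun t : ℝ => 2*t) (Icc 0 (1/2)) := by
      intro a _ c _ hac; dsimp only; linarith
    exact eVariationOn.comp_le_of_monotoneOn γ₁ _ hmono hm1
  have hv2 : eVariationOn σ (Icc (1/2) 1) ≤ pathLength γ₂ := by
    have heq : EqOn σ (γ₂ ∘ fun t : ℝ => 2*t - 1) (Icc (1/2) 1) := by
      rintro t ⟨h0, _⟩
      rcases eq_or_lt_of_le h0 with h | h
      · have ht : t = 1/2 := h.symm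
        subst ht
        have : σ (1/2 : ℝ) = γ₁ (2 * (1/2)) := if_pos le_rfl
        rw [this]
        norm_num [h₁1, h₂0]
      · exact if_neg (not_le.mpr h)
    rw [eVariationOn.eq_of_eqOn heq]
    have hmono : MonotoneOn (fun t : ℝ => 2*t - 1) (Icc (1/2) 1) := by
      intro a _ c _ hac; dsimp only; linarith
    exact eVariationOn.comp_le_of_monotoneOn γ₂ _ hmono hm2
  calc eGeod P p q ≤ pathLength σ := eGeod_le P σ hσc hσ0 hσ1 hσP
    _ = eVariationOn σ (Icc 0 (1/2)) + eVariationOn σ (Icc (1/2) 1) := hsplit.symm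
    _ ≤ pathLength γ₁ + pathLength γ₂ := add_le_add hv1 hv2

/-- Triangle inequality for the extended geodesic distance. -/
lemma eGeod_triangle (P : Set E2) (p x q : E2) :
    eGeod P p q ≤ eGeod P p x + eGeod P x q := by
  rw [show eGeod P p x + eGeod P x q = ⨅ γ₁ : {γ : ℝ → E2 // ContinuousOn γ (Icc 0 1) ∧
        γ 0 = p ∧ γ 1 = x ∧ γ '' Icc 0 1 ⊆ P}, (pathLength γ₁.1 + eGeod P x q)
      from ENNReal.iInf_add]
  refine le_iInf fun γ₁ => ?_
  rw [show pathLength γ₁.1 + eGeod P x q = ⨅ γ₂ : {γ : ℝ → E2 // ContinuousOn γ (Icc 0 1) ∧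
        γ 0 = x ∧ γ 1 = q ∧ γ '' Icc 0 1 ⊆ P}, (pathLength γ₁.1 + pathLength γ₂.1)
      from ENNReal.add_iInf]
  refine le_iInf fun γ₂ => ?_
  obtain ⟨g₁, h₁c, h₁0, h₁1, h₁P⟩ := γ₁
  obtain ⟨g₂, h₂c, h₂0, h₂1, h₂P⟩ := γ₂
  exact eGeod_le_concat P h₁c h₁0 h₁1 h₁P h₂c h₂0 h₂1 h₂P

/-- A piecewise affine curve has finite length. -/
lemma pw_affine_bounded {C : ℝ → E2} (h : IsPiecewiseAffine C) :
    eVariationOn C (Icc 0 1) ≠ ⊤ := by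
  obtain ⟨k, t, hk, ht0, htk, hlt, haff⟩ := h
  have hmono : ∀ i j, i ≤ j → j ≤ k → t i ≤ t j := by
    intro i j hij hjk
    induction j with
    | zero => simp_all
    | succ n ih =>
      rcases Nat.eq_or_lt_of_le hij with h | h
      · rw [h]
      · exact le_trans (ih (Nat.lt_succ_iff.mp h) (le_trans (Nat.le_succ n) hjk))
          (hlt n (Nat.lt_of_succ_le hjk)).le
  have piece : ∀ i < k, eVariationOn C (Icc (t i) (t (i+1))) ≠ ⊤ := by
    intro i hi
    set a := t i with ha
    set d := t (i+1) - t i with hd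
    have hdpos : 0 < d := sub_pos.mpr (hlt i hi)
    set v := C (t (i+1)) - C (t i) with hv
    set φ : ℝ → ℝ := fun s => (s - a) / d with hφdef
    have heq : EqOn C ((fun c : ℝ => C (t i) + c • v) ∘ φ) (Icc (t i) (t (i+1))) := by
      intro s hs
      exact haff i hi s hs
    rw [eVariationOn.eq_of_eqOn heq]
    have hlip : LipschitzWith ‖v‖₊ (fun c : ℝ => C (t i) + c • v) := by
      refine LipschitzWith.of_dist_le_mul fun s₁ s₂ => ?_
      rw [dist_add_left, dist_eq_norm, ← sub_smul, norm_smul, Real.dist_eq, coe_nnnorm,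
        Real.norm_eq_abs, mul_comm]
    have hbound := hlip.lipschitzOnWith.comp_eVariationOn_le
      (g := φ) (s := Icc (t i) (t (i+1))) (mapsTo_univ _ _)
    refine ne_top_of_le_ne_top ?_ hbound
    apply ENNReal.mul_ne_top ENNReal.coe_ne_top
    have hφmono : MonotoneOn φ (Icc (t i) (t (i+1))) := by
      intro s₁ _ s₂ _ h12
      simp only [hφdef]
      gcongr
    have hab : t i ≤ t (i+1) := (hlt i hi).le
    have := hφmono.eVariationOn_le (a := t i) (b := t (i+1))
      (left_mem_Icc.mpr hab) (right_mem_Icc.mpr hab)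
    rw [inter_self] at this
    exact ne_top_of_le_ne_top ENNReal.ofReal_ne_top this
  have total : ∀ i, i ≤ k → eVariationOn C (Icc (t 0) (t i)) ≠ ⊤ := by
    intro i
    induction i with
    | zero =>
      intro _
      rw [Icc_self, eVariationOn.subsingleton C subsingleton_singleton]
      exact ENNReal.zero_ne_top
    | succ n ih =>
      intro hik
      have hn : n < k := Nat.lt_of_succ_le hik
      have hsum := eVariationOn.Icc_add_Icc C (s := univ)
        (hmono 0 n (Nat.zero_le _) hn.le) (hlt n hn).le (mem_univ (t n))
      simp only [univ_inter] at hsum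
      rw [← hsum]
      exact ENNReal.add_ne_top.mpr ⟨ih hn.le, piece n hn⟩
  rw [← ht0, ← htk]
  exact total k le_rfl

end GeodAux

/-- If `b` is a nearest neighbor of `r ∈ R` and `γ` is a geodesic
from `r` to `b` in `P`, then for points `r'` on `R` and `b'` on `B` that lie in
different connected components of `P \ image γ`, we have `d(r', b) ≤ d(r', b')`. -/
theorem geodesic_separator_shortcut
    (R B : ℝ → E2) (hRB : SimplePolygonalPair R B)
    (P : Set E2) (hP : P = polygonOf R B)
    (r b : E2) (hr : r ∈ R '' Icc (0:ℝ) 1) (hb : IsNearestNeighbor P B r b)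
    (γ : ℝ → E2) (hγc : ContinuousOn γ (Icc 0 1)) (hγ0 : γ 0 = r) (hγ1 : γ 1 = b)
    (hγP : γ '' Icc (0:ℝ) 1 ⊆ P)
    (hγlen : pathLength γ = ENNReal.ofReal (geodDist P r b))
    (r' b' : E2) (hr' : r' ∈ R '' Icc (0:ℝ) 1) (hb' : b' ∈ B '' Icc (0:ℝ) 1)
    (hr'P : r' ∈ P \ γ '' Icc (0:ℝ) 1) (hb'P : b' ∈ P \ γ '' Icc (0:ℝ) 1)
    (hdiff : connectedComponentIn (P \ γ '' Icc (0:ℝ) 1) r' ≠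
             connectedComponentIn (P \ γ '' Icc (0:ℝ) 1) b') :
    geodDist P r' b ≤ geodDist P r' b' := by
  classical
  obtain ⟨hbB, hnn⟩ := hb
  have h01 : Icc (0:ℝ) 1 = uIcc 0 1 := (uIcc_of_le zero_le_one).symm
  have hBP : B '' Icc (0:ℝ) 1 ⊆ P := by
    rw [hP]
    intro y hy
    exact Or.inl (Or.inr hy)
  have hplγ : pathLength γ = eVariationOn γ (Icc 0 1) := rfl
  have hγgeod : pathLength γ = GeodAux.eGeod P r b := by
    refine le_antisymm ?_ (GeodAux.eGeod_le P γ hγc hγ0 hγ1 hγP)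
    rw [hγlen, GeodAux.geodDist_eq]
    exact ENNReal.ofReal_toReal_le
  have hplfin : pathLength γ ≠ ⊤ := by rw [hγlen]; exact ENNReal.ofReal_ne_top
  have hfin_rb : GeodAux.eGeod P r b ≠ ⊤ := hγgeod ▸ hplfin
  have key : GeodAux.eGeod P r' b ≤ GeodAux.eGeod P r' b' := by
    rw [GeodAux.eGeod_def P r' b']
    refine le_iInf ?_
    rintro ⟨σ, hσc, hσ0, hσ1, hσP⟩
    show GeodAux.eGeod P r' b ≤ pathLength σ
    have hcross : ∃ u ∈ Icc (0:ℝ) 1, σ u ∈ γ '' Icc (0:ℝ) 1 := by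
      by_contra hcon
      push_neg at hcon
      have hsub : σ '' Icc 0 1 ⊆ P \ γ '' Icc (0:ℝ) 1 := by
        rintro _ ⟨t, ht, rfl⟩
        exact ⟨hσP (mem_image_of_mem _ ht), hcon t ht⟩
      have hconn : IsPreconnected (σ '' Icc 0 1) := isPreconnected_Icc.image σ hσc
      have hr'mem : r' ∈ σ '' Icc 0 1 := ⟨0, left_mem_Icc.mpr zero_le_one, hσ0⟩
      have hb'mem : b' ∈ σ '' Icc 0 1 := ⟨1, right_mem_Icc.mpr zero_le_one, hσ1⟩
      exact hdiff (connectedComponentIn_eq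
        (hconn.subset_connectedComponentIn hr'mem hsub hb'mem))
    obtain ⟨u, hu, s, hs, hγs⟩ := hcross
    have h1 : GeodAux.eGeod P r' (σ u) ≤ eVariationOn σ (Icc 0 u) := by
      have := GeodAux.eGeod_subpath P hσc hσP (left_mem_Icc.mpr zero_le_one) hu
      rwa [hσ0, uIcc_of_le hu.1] at this
    have h2 : GeodAux.eGeod P (σ u) b' ≤ eVariationOn σ (Icc u 1) := by
      have := GeodAux.eGeod_subpath P hσc hσP hu (right_mem_Icc.mpr zero_le_one)
      rwa [hσ1, uIcc_of_le hu.2] at this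
    have hL1 : GeodAux.eGeod P r (σ u) ≤ eVariationOn γ (Icc 0 s) := by
      have := GeodAux.eGeod_subpath P hγc hγP (left_mem_Icc.mpr zero_le_one) hs
      rwa [hγ0, hγs, uIcc_of_le hs.1] at this
    have hL2 : GeodAux.eGeod P (σ u) b ≤ eVariationOn γ (Icc s 1) := by
      have := GeodAux.eGeod_subpath P hγc hγP hs (right_mem_Icc.mpr zero_le_one)
      rwa [hγ1, hγs, uIcc_of_le hs.2] at this
    have hγsplit : eVariationOn γ (Icc 0 s) + eVariationOn γ (Icc s 1)
        = pathLength γ := by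
      rw [hplγ]
      simpa using eVariationOn.Icc_add_Icc γ (s := univ) hs.1 hs.2 (mem_univ s)
    have hL1fin : eVariationOn γ (Icc 0 s) ≠ ⊤ :=
      ne_top_of_le_ne_top hplfin (hγsplit ▸ le_self_add)
    have hxb : GeodAux.eGeod P (σ u) b ≤ GeodAux.eGeod P (σ u) b' := by
      by_cases htop : GeodAux.eGeod P (σ u) b' = ⊤
      · rw [htop]; exact le_top
      have h3 : GeodAux.eGeod P r b' ≤ eVariationOn γ (Icc 0 s) + GeodAux.eGeod P (σ u) b' :=
        (GeodAux.eGeod_triangle P r (σ u) b').trans (add_le_add_left hL1 _)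
      have hfinb' : GeodAux.eGeod P r b' ≠ ⊤ :=
        ne_top_of_le_ne_top (ENNReal.add_ne_top.mpr ⟨hL1fin, htop⟩) h3
      have hreal : GeodAux.eGeod P r b ≤ GeodAux.eGeod P r b' := by
        have h := hnn b' hb'
        rw [GeodAux.geodDist_eq, GeodAux.geodDist_eq] at h
        exact (ENNReal.toReal_le_toReal hfin_rb hfinb').mp h
      have h4 : eVariationOn γ (Icc 0 s) + eVariationOn γ (Icc s 1)
          ≤ eVariationOn γ (Icc 0 s) + GeodAux.eGeod P (σ u) b' := by
        rw [hγsplit, hγgeod]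
        exact hreal.trans h3
      exact hL2.trans ((ENNReal.add_le_add_iff_left hL1fin).mp h4)
    have hσsplit : eVariationOn σ (Icc 0 u) + eVariationOn σ (Icc u 1)
        = pathLength σ := by
      show _ = eVariationOn σ (Icc 0 1)
      simpa using eVariationOn.Icc_add_Icc σ (s := univ) hu.1 hu.2 (mem_univ u)
    calc GeodAux.eGeod P r' b ≤ GeodAux.eGeod P r' (σ u) + GeodAux.eGeod P (σ u) b :=
          GeodAux.eGeod_triangle P r' (σ u) b
      _ ≤ eVariationOn σ (Icc 0 u) + eVariationOn σ (Icc u 1) :=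
          add_le_add h1 (hxb.trans h2)
      _ = pathLength σ := hσsplit
  by_cases htop : GeodAux.eGeod P r' b' = ⊤
  · have hbb' : GeodAux.eGeod P b b' ≠ ⊤ := by
      obtain ⟨t₀, ht₀, hbeq⟩ := hbB
      obtain ⟨t₁, ht₁, hbeq'⟩ := hb'
      have hsub := GeodAux.eGeod_subpath P hRB.2.1 hBP ht₀ ht₁
      rw [hbeq, hbeq'] at hsub
      refine ne_top_of_le_ne_top ?_ hsub
      refine ne_top_of_le_ne_top (GeodAux.pw_affine_bounded hRB.2.2.2.1) ?_
      refine eVariationOn.mono B ?_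
      rw [h01]
      exact uIcc_subset_uIcc (h01 ▸ ht₀) (h01 ▸ ht₁)
    have hrb_top : GeodAux.eGeod P r' b = ⊤ := by
      by_contra h
      exact ne_top_of_le_ne_top (ENNReal.add_ne_top.mpr ⟨h, hbb'⟩)
        (GeodAux.eGeod_triangle P r' b b') htop
    rw [GeodAux.geodDist_eq, GeodAux.geodDist_eq, hrb_top, htop]
  · rw [GeodAux.geodDist_eq, GeodAux.geodDist_eq]
    exact ENNReal.toReal_mono htop key
end
end

section
/- For any prefix-minimum vertex R(i) of R and any prefix-minimum vertex B(j) of B, we have d_F(R|[i, n], B|[j, m]) ≤ d_F(R, B). -/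
open Set

noncomputable section

/-- `R : [1, n] → ℝ` is a one-dimensional polygonal curve with vertices
`R 1, …, R n`: it is affine on each interval `[k, k+1]`. -/
def IsPoly1D (R : ℝ → ℝ) (n : ℕ) : Prop :=
  ∀ k : ℕ, 1 ≤ k → k < n → ∀ x ∈ Icc (k : ℝ) ((k : ℝ) + 1),
    R x = R (k : ℝ) + (x - (k : ℝ)) * (R ((k : ℝ) + 1) - R (k : ℝ))

/-- A reparameterization of `[a, b]`: a nondecreasing surjection `[0,1] → [a, b]`. -/
def IsRepar1 (f : ℝ → ℝ) (a b : ℝ) : Prop :=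
  MonotoneOn f (Icc 0 1) ∧ MapsTo f (Icc 0 1) (Icc a b) ∧ SurjOn f (Icc 0 1) (Icc a b)

/-- The cost of a matching `(f, g)` between one-dimensional curves. -/
def cost1 (R B : ℝ → ℝ) (f g : ℝ → ℝ) : ℝ :=
  sSup {c : ℝ | ∃ t ∈ Icc (0:ℝ) 1, c = |R (f t) - B (g t)|}

/-- The Fréchet distance between the subcurves `R|[a, b]` and `B|[c, d]` of
one-dimensional curves `R` and `B`. -/
def dF1 (R B : ℝ → ℝ) (a b c d : ℝ) : ℝ :=
  sInf {x : ℝ | ∃ f g : ℝ → ℝ, IsRepar1 f a b ∧ IsRepar1 g c d ∧ x = cost1 R B f g}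

lemma isRepar1_linear (a b : ℝ) (hab : a ≤ b) :
    IsRepar1 (fun t => a + t * (b - a)) a b := by
  refine ⟨?_, ?_, ?_⟩
  · intro s hs t ht hst
    dsimp only
    nlinarith [hs.1, ht.1]
  · intro t ht
    constructor <;> (dsimp only; nlinarith [ht.1, ht.2])
  · intro y hy
    rcases eq_or_lt_of_le hab with h | h
    · refine ⟨0, ⟨le_refl 0, zero_le_one⟩, ?_⟩
      have h1 := hy.1; have h2 := hy.2
      dsimp only
      subst h
      linarith [h1, h2]
    · refine ⟨(y - a) / (b - a), ⟨?_, ?_⟩, ?_⟩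
      · apply div_nonneg <;> linarith [hy.1]
      · rw [div_le_one (by linarith)]; linarith [hy.2]
      · have hba : b - a ≠ 0 := by linarith
        dsimp only
        rw [div_mul_cancel₀ _ hba]
        ring

/-- On a polygonal curve, every point is sandwiched between two vertex values. -/
lemma poly_sandwich (R : ℝ → ℝ) (n : ℕ) (hn : 1 ≤ n) (hR : IsPoly1D R n) :
    ∀ x ∈ Icc (1:ℝ) n, ∃ k l : ℕ, 1 ≤ k ∧ k ≤ n ∧ 1 ≤ l ∧ l ≤ n ∧
      R (k : ℝ) ≤ R x ∧ R x ≤ R (l : ℝ) := by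
  intro x hx
  rcases eq_or_lt_of_le hx.2 with h | h
  · exact ⟨n, n, hn, le_refl _, hn, le_refl _, by rw [h], by rw [h]⟩
  · set k := ⌊x⌋₊ with hkdef
    have hx1 : (1:ℝ) ≤ x := hx.1
    have hk1 : 1 ≤ k := Nat.le_floor (by exact_mod_cast hx1)
    have hkx : (k:ℝ) ≤ x := Nat.floor_le (by linarith)
    have hxk1 : x ≤ (k:ℝ) + 1 := (Nat.lt_floor_add_one x).le
    have hkn : k < n := by
      have : (k:ℝ) < n := lt_of_le_of_lt hkx h
      exact_mod_cast this
    have heq := hR k hk1 hkn x ⟨hkx, hxk1⟩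
    by_cases hc : R (k:ℝ) ≤ R ((k:ℝ) + 1)
    · refine ⟨k, k + 1, hk1, hkn.le, by omega, by omega, ?_, ?_⟩
      · nlinarith
      · push_cast
        nlinarith
    · push_neg at hc
      refine ⟨k + 1, k, by omega, by omega, hk1, hkn.le, ?_, ?_⟩
      · push_cast
        nlinarith
      · nlinarith

/-- For a prefix-minimum vertex `R i` of `R` and a prefix-minimum
vertex `B j` of `B`, we have `d_F(R|[i, n], B|[j, m]) ≤ d_F(R, B)`. -/
theorem advancing_to_prefix_minima
    (n m : ℕ) (hn : 1 ≤ n) (hm : 1 ≤ m)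
    (R B : ℝ → ℝ) (hR : IsPoly1D R n) (hB : IsPoly1D B m)
    (hsepR : ∀ x ∈ Icc (1:ℝ) n, R x ≤ 0) (hsepB : ∀ y ∈ Icc (1:ℝ) m, 0 ≤ B y)
    (i j : ℕ) (hi1 : 1 ≤ i) (hin : i ≤ n) (hj1 : 1 ≤ j) (hjm : j ≤ m)
    (hpi : ∀ x ∈ Icc (1:ℝ) (i : ℝ), |R (i : ℝ)| ≤ |R x|)
    (hpj : ∀ y ∈ Icc (1:ℝ) (j : ℝ), |B (j : ℝ)| ≤ |B y|) :
    dF1 R B (i : ℝ) (n : ℝ) (j : ℝ) (m : ℝ) ≤ dF1 R B 1 (n : ℝ) 1 (m : ℝ) := by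
  have h1n : (1:ℝ) ≤ (n:ℝ) := by exact_mod_cast hn
  have h1m : (1:ℝ) ≤ (m:ℝ) := by exact_mod_cast hm
  have h1i : (1:ℝ) ≤ (i:ℝ) := by exact_mod_cast hi1
  have h1j : (1:ℝ) ≤ (j:ℝ) := by exact_mod_cast hj1
  have hinR : (i:ℝ) ≤ (n:ℝ) := by exact_mod_cast hin
  have hjmR : (j:ℝ) ≤ (m:ℝ) := by exact_mod_cast hjm
  -- a uniform bound on |R x - B y|
  set C : ℝ := (∑ k ∈ Finset.Icc 1 n, |R (k:ℝ)|) + (∑ k ∈ Finset.Icc 1 m, |B (k:ℝ)|)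
    with hCdef
  have hC : ∀ x ∈ Icc (1:ℝ) n, ∀ y ∈ Icc (1:ℝ) m, |R x - B y| ≤ C := by
    intro x hx y hy
    obtain ⟨k, _, hk1, hk2, _, _, hkR, _⟩ := poly_sandwich R n hn hR x hx
    obtain ⟨_, l, _, _, hl1, hl2, _, hlB⟩ := poly_sandwich B m hm hB y hy
    have hRx : R x ≤ 0 := hsepR x hx
    have hBy : 0 ≤ B y := hsepB y hy
    have habs : |R x - B y| = B y - R x := by
      rw [abs_of_nonpos (by linarith)]; ring
    have hRk : |R (k:ℝ)| ≤ ∑ k ∈ Finset.Icc 1 n, |R (k:ℝ)| :=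
      Finset.single_le_sum (f := fun k : ℕ => |R (k:ℝ)|)
        (fun _ _ => abs_nonneg _) (Finset.mem_Icc.mpr ⟨hk1, hk2⟩)
    have hBl : |B (l:ℝ)| ≤ ∑ k ∈ Finset.Icc 1 m, |B (k:ℝ)| :=
      Finset.single_le_sum (f := fun k : ℕ => |B (k:ℝ)|)
        (fun _ _ => abs_nonneg _) (Finset.mem_Icc.mpr ⟨hl1, hl2⟩)
    have h1 : -R (k:ℝ) ≤ |R (k:ℝ)| := neg_le_abs _
    have h2 : B (l:ℝ) ≤ |B (l:ℝ)| := le_abs_self _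
    rw [habs, hCdef]
    linarith
  -- cost sets are bounded above by C and nonneg
  have hbdd : ∀ f g : ℝ → ℝ, MapsTo f (Icc 0 1) (Icc (1:ℝ) n) →
      MapsTo g (Icc 0 1) (Icc (1:ℝ) m) →
      ∀ c ∈ {c : ℝ | ∃ t ∈ Icc (0:ℝ) 1, c = |R (f t) - B (g t)|}, c ≤ C := by
    rintro f g hf hg c ⟨t, ht, rfl⟩
    exact hC _ (hf ht) _ (hg ht)
  unfold dF1
  -- the set for the full curves is nonempty
  have hS1ne : ({x : ℝ | ∃ f g : ℝ → ℝ, IsRepar1 f 1 n ∧ IsRepar1 g 1 m ∧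
      x = cost1 R B f g}).Nonempty :=
    ⟨_, _, _, isRepar1_linear 1 n h1n, isRepar1_linear 1 m h1m, rfl⟩
  have hS2bb : BddBelow {x : ℝ | ∃ f g : ℝ → ℝ, IsRepar1 f i n ∧ IsRepar1 g j m ∧
      x = cost1 R B f g} := by
    refine ⟨0, ?_⟩
    rintro x ⟨f, g, hf, hg, rfl⟩
    exact Real.sSup_nonneg (by rintro c ⟨t, ht, rfl⟩; positivity)
  apply le_csInf hS1ne
  rintro x ⟨f, g, hf, hg, rfl⟩
  -- modified matching
  set f' : ℝ → ℝ := fun t => max (i:ℝ) (f t) with hf'def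
  set g' : ℝ → ℝ := fun t => max (j:ℝ) (g t) with hg'def
  have hf' : IsRepar1 f' (i:ℝ) (n:ℝ) := by
    refine ⟨?_, ?_, ?_⟩
    · intro s hs t ht hst
      exact max_le_max le_rfl (hf.1 hs ht hst)
    · intro t ht
      exact ⟨le_max_left _ _, max_le hinR (hf.2.1 ht).2⟩
    · intro y hy
      obtain ⟨t, ht, hft⟩ := hf.2.2 ⟨le_trans h1i hy.1, hy.2⟩
      exact ⟨t, ht, by simp [hf'def, hft, max_eq_right hy.1]⟩
  have hg' : IsRepar1 g' (j:ℝ) (m:ℝ) := by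
    refine ⟨?_, ?_, ?_⟩
    · intro s hs t ht hst
      exact max_le_max le_rfl (hg.1 hs ht hst)
    · intro t ht
      exact ⟨le_max_left _ _, max_le hjmR (hg.2.1 ht).2⟩
    · intro y hy
      obtain ⟨t, ht, hgt⟩ := hg.2.2 ⟨le_trans h1j hy.1, hy.2⟩
      exact ⟨t, ht, by simp [hg'def, hgt, max_eq_right hy.1]⟩
  -- pointwise comparison
  have hpoint : ∀ t ∈ Icc (0:ℝ) 1,
      |R (f' t) - B (g' t)| ≤ |R (f t) - B (g t)| := by
    intro t ht
    have hxf : f t ∈ Icc (1:ℝ) n := hf.2.1 ht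
    have hxg : g t ∈ Icc (1:ℝ) m := hg.2.1 ht
    have hxf' : f' t ∈ Icc (1:ℝ) n := ⟨le_trans h1i (le_max_left _ _),
      max_le hinR hxf.2⟩
    have hxg' : g' t ∈ Icc (1:ℝ) m := ⟨le_trans h1j (le_max_left _ _),
      max_le hjmR hxg.2⟩
    have hR1 : R (f t) ≤ R (f' t) := by
      rcases le_or_gt (i:ℝ) (f t) with h | h
      · simp [hf'def, max_eq_right h]
      · have : f' t = (i:ℝ) := max_eq_left h.le
        rw [this]
        have := hpi (f t) ⟨hxf.1, h.le⟩
        have hRi : R (i:ℝ) ≤ 0 := hsepR _ ⟨h1i, hinR⟩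
        have hRf : R (f t) ≤ 0 := hsepR _ hxf
        rw [abs_of_nonpos hRi, abs_of_nonpos hRf] at this
        linarith
    have hB1 : B (g' t) ≤ B (g t) := by
      rcases le_or_gt (j:ℝ) (g t) with h | h
      · simp [hg'def, max_eq_right h]
      · have : g' t = (j:ℝ) := max_eq_left h.le
        rw [this]
        have := hpj (g t) ⟨hxg.1, h.le⟩
        have hBj : 0 ≤ B (j:ℝ) := hsepB _ ⟨h1j, hjmR⟩
        have hBg : 0 ≤ B (g t) := hsepB _ hxg
        rw [abs_of_nonneg hBj, abs_of_nonneg hBg] at this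
        linarith
    have e1 : |R (f' t) - B (g' t)| = B (g' t) - R (f' t) := by
      rw [abs_of_nonpos (by linarith [hsepR _ hxf', hsepB _ hxg'])]; ring
    have e2 : |R (f t) - B (g t)| = B (g t) - R (f t) := by
      rw [abs_of_nonpos (by linarith [hsepR _ hxf, hsepB _ hxg])]; ring
    rw [e1, e2]
    linarith
  have hkey : cost1 R B f' g' ≤ cost1 R B f g := by
    apply Real.sSup_le
    · rintro c ⟨t, ht, rfl⟩
      refine (hpoint t ht).trans (le_csSup ?_ ⟨t, ht, rfl⟩)
      exact ⟨C, hbdd f g hf.2.1 hg.2.1⟩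
    · exact Real.sSup_nonneg (by rintro c ⟨t, ht, rfl⟩; positivity)
  exact (csInf_le hS2bb ⟨f', g', hf', hg', rfl⟩).trans hkey
end
end

section
/- Let R(i) be a prefix-minimum vertex of R and B(j) a prefix-minimum vertex of B. Then there exists a prefix-minima Fréchet matching between R|[1, i] and B|[1, j]: nondecreasing surjections f : [0,1] → [1, i] and g : [0,1] → [1, j] such that sup_{t ∈ [0,1]} |R(f(t)) − B(g(t))| ≤ d_F(R|[1, i], B|[1, j]) and, for every t ∈ [0,1], either R(f(t)) ≥ R(x) for all x ∈ [1, f(t)], or B(g(t)) ≤ B(y) for all y ∈ [1, g(t)] (at each time at least one of the two matched points is a prefix-minimum point of its curve). -/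
open Set

noncomputable section

def lin (a b : ℝ) : ℝ → ℝ := fun t => a + t * (b - a)

lemma lin_mem {a b : ℝ} (h : a ≤ b) {t : ℝ} (ht : t ∈ Icc (0:ℝ) 1) :
    lin a b t ∈ Icc a b := by
  obtain ⟨h0, h1⟩ := ht
  constructor <;> simp only [lin] <;> nlinarith

lemma isRepar1_lin {a b : ℝ} (h : a ≤ b) : IsRepar1 (lin a b) a b := by
  refine ⟨?_, fun t ht => lin_mem h ht, ?_⟩
  · intro s hs t ht hst
    simp only [lin]
    nlinarith [hs.1, ht.2]
  · intro x hx
    rcases eq_or_lt_of_le h with rfl | hlt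
    · refine ⟨0, by norm_num, ?_⟩
      have := hx.1; have := hx.2
      simp only [lin]; linarith
    · refine ⟨(x - a) / (b - a), ⟨?_, ?_⟩, ?_⟩
      · have h1 := hx.1
        apply div_nonneg (by linarith) (by linarith)
      · rw [div_le_one (by linarith)]; linarith [hx.2]
      · simp only [lin]
        rw [div_mul_cancel₀ _ (by linarith : b - a ≠ 0)]
        ring

lemma repar_le {f : ℝ → ℝ} {a b : ℝ} (h : IsRepar1 f a b) : a ≤ b := by
  have := h.2.1 (show (0:ℝ) ∈ Icc (0:ℝ) 1 by norm_num)
  exact le_trans this.1 this.2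

lemma repar_left_end {f : ℝ → ℝ} {a b : ℝ} (h : IsRepar1 f a b) : f 0 = a := by
  obtain ⟨t, ht, hft⟩ := h.2.2 (show a ∈ Icc a b from ⟨le_refl _, repar_le h⟩)
  have h1 : f 0 ≤ f t := h.1 (by norm_num) ht ht.1
  have h2 : a ≤ f 0 := (h.2.1 (by norm_num : (0:ℝ) ∈ Icc (0:ℝ) 1)).1
  rw [hft] at h1; linarith

lemma repar_right_end {f : ℝ → ℝ} {a b : ℝ} (h : IsRepar1 f a b) : f 1 = b := by
  obtain ⟨t, ht, hft⟩ := h.2.2 (show b ∈ Icc a b from ⟨repar_le h, le_refl _⟩)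
  have h1 : f t ≤ f 1 := h.1 ht (by norm_num) ht.2
  have h2 : f 1 ≤ b := (h.2.1 (by norm_num : (1:ℝ) ∈ Icc (0:ℝ) 1)).2
  rw [hft] at h1; linarith
def glue (f1 f2 : ℝ → ℝ) : ℝ → ℝ := fun t => if t ≤ 1/2 then f1 (2*t) else f2 (2*t - 1)

lemma isRepar1_glue {f1 f2 : ℝ → ℝ} {a c b : ℝ}
    (h1 : IsRepar1 f1 a c) (h2 : IsRepar1 f2 c b) : IsRepar1 (glue f1 f2) a b := by
  have hac := repar_le h1
  have hcb := repar_le h2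
  have key1 : ∀ t ∈ Icc (0:ℝ) 1, t ≤ 1/2 → (2*t) ∈ Icc (0:ℝ) 1 := by
    intro t ht h; exact ⟨by linarith [ht.1], by linarith⟩
  have key2 : ∀ t ∈ Icc (0:ℝ) 1, ¬(t ≤ 1/2) → (2*t - 1) ∈ Icc (0:ℝ) 1 := by
    intro t ht h; push_neg at h; exact ⟨by linarith, by linarith [ht.2]⟩
  have hub : ∀ t ∈ Icc (0:ℝ) 1, t ≤ 1/2 → f1 (2*t) ≤ c := by
    intro t ht h; exact (h1.2.1 (key1 t ht h)).2
  have hlb : ∀ t ∈ Icc (0:ℝ) 1, ¬(t ≤ 1/2) → c ≤ f2 (2*t - 1) := by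
    intro t ht h; exact (h2.2.1 (key2 t ht h)).1
  refine ⟨?_, ?_, ?_⟩
  · intro s hs t ht hst
    simp only [glue]
    by_cases h : s ≤ 1/2 <;> by_cases h' : t ≤ 1/2
    · simp only [h, h', if_true]
      exact h1.1 (key1 s hs h) (key1 t ht h') (by linarith)
    · simp only [h, h', if_true, if_false]
      exact le_trans (hub s hs h) (hlb t ht h')
    · exact absurd (le_trans hst h') h
    · simp only [h, h', if_false]
      exact h2.1 (key2 s hs h) (key2 t ht h') (by linarith)
  · intro t ht
    simp only [glue]
    by_cases h : t ≤ 1/2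
    · simp only [h, if_true]
      have := h1.2.1 (key1 t ht h)
      exact ⟨this.1, le_trans this.2 hcb⟩
    · simp only [h, if_false]
      have := h2.2.1 (key2 t ht h)
      exact ⟨le_trans hac this.1, this.2⟩
  · intro x hx
    by_cases h : x ≤ c
    · obtain ⟨s, hs, hfs⟩ := h1.2.2 (show x ∈ Icc a c from ⟨hx.1, h⟩)
      refine ⟨s/2, ⟨by linarith [hs.1], by linarith [hs.2]⟩, ?_⟩
      have hs2 : s/2 ≤ 1/2 := by linarith [hs.2]
      simp only [glue, hs2, if_true]
      rw [show 2*(s/2) = s by ring]; exact hfs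
    · push_neg at h
      obtain ⟨s, hs, hfs⟩ := h2.2.2 (show x ∈ Icc c b from ⟨le_of_lt h, hx.2⟩)
      by_cases hs0 : s = 0
      · refine ⟨1/2, by norm_num, ?_⟩
        simp only [glue, le_refl, if_true]
        rw [show 2*(1/2:ℝ) = 1 by norm_num, repar_right_end h1]
        rw [hs0] at hfs; rw [repar_left_end h2] at hfs; exact hfs
      · refine ⟨(s+1)/2, ⟨by linarith [hs.1], by linarith [hs.2]⟩, ?_⟩
        have : ¬((s+1)/2 ≤ 1/2) := by
          have := lt_of_le_of_ne hs.1 (Ne.symm hs0); push_neg; linarith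
        simp only [glue, this, if_false]
        rw [show 2*((s+1)/2) - 1 = s by ring]; exact hfs

lemma glue_cases (f1 f2 g1 g2 : ℝ → ℝ) {t : ℝ} (ht : t ∈ Icc (0:ℝ) 1) :
    ∃ s ∈ Icc (0:ℝ) 1, (glue f1 f2 t = f1 s ∧ glue g1 g2 t = g1 s) ∨
      (glue f1 f2 t = f2 s ∧ glue g1 g2 t = g2 s) := by
  by_cases h : t ≤ 1/2
  · exact ⟨2*t, ⟨by linarith [ht.1], by linarith⟩, Or.inl ⟨by simp only [glue, if_pos h], by simp only [glue, if_pos h]⟩⟩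
  · push_neg at h
    exact ⟨2*t - 1, ⟨by linarith, by linarith [ht.2]⟩,
      Or.inr ⟨by simp only [glue, if_neg (not_le.mpr h)],
        by simp only [glue, if_neg (not_le.mpr h)]⟩⟩
lemma poly_mem_Icc {R : ℝ → ℝ} {n : ℕ} (hR : IsPoly1D R n) {k : ℕ} (h1 : 1 ≤ k) (h2 : k < n)
    {x : ℝ} (hx : x ∈ Icc (k:ℝ) ((k:ℝ)+1)) :
    min (R k) (R ((k:ℝ)+1)) ≤ R x ∧ R x ≤ max (R k) (R ((k:ℝ)+1)) := by
  have hf := hR k h1 h2 x hx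
  obtain ⟨ha, hb⟩ := hx
  have hs0 : 0 ≤ x - k := by linarith
  have hs1 : x - k ≤ 1 := by linarith
  rcases le_total (R k) (R ((k:ℝ)+1)) with h | h
  · rw [min_eq_left h, max_eq_right h]; constructor <;> nlinarith
  · rw [min_eq_right h, max_eq_left h]; constructor <;> nlinarith

lemma poly_exists_edge {a b : ℕ} (hab : a < b) {x : ℝ} (hx : x ∈ Icc (a:ℝ) (b:ℝ)) :
    ∃ k : ℕ, a ≤ k ∧ k + 1 ≤ b ∧ x ∈ Icc (k:ℝ) ((k:ℝ)+1) := by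
  set k : ℕ := min (⌊x⌋).toNat (b-1) with hk
  have hfl : (a:ℤ) ≤ ⌊x⌋ := Int.le_floor.mpr (by exact_mod_cast hx.1)
  have hka : a ≤ k := by omega
  have hkb : k + 1 ≤ b := by omega
  refine ⟨k, hka, hkb, ?_, ?_⟩
  · calc (k:ℝ) ≤ ((⌊x⌋).toNat : ℝ) := by exact_mod_cast min_le_left _ _
      _ = (⌊x⌋ : ℝ) := by exact_mod_cast Int.toNat_of_nonneg (by omega)
      _ ≤ x := Int.floor_le x
  · by_cases h : (⌊x⌋).toNat ≤ b - 1
    · have hke : k = (⌊x⌋).toNat := by omega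
      have : (⌊x⌋ : ℝ) = (k : ℝ) := by
        rw [hke]; exact_mod_cast (Int.toNat_of_nonneg (by omega)).symm
      have := Int.lt_floor_add_one x
      linarith
    · have hke : (k:ℕ) + 1 = b := by omega
      calc x ≤ (b:ℝ) := hx.2
        _ = (k:ℝ) + 1 := by exact_mod_cast hke.symm

lemma poly_bound_below {R : ℝ → ℝ} {n : ℕ} (hR : IsPoly1D R n) {a b : ℕ}
    (ha : 1 ≤ a) (hb : b ≤ n) {c : ℝ}
    (hc : ∀ k : ℕ, a ≤ k → k ≤ b → c ≤ R k) :
    ∀ x ∈ Icc (a:ℝ) (b:ℝ), c ≤ R x := by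
  intro x hx
  have hab : a ≤ b := by exact_mod_cast le_trans hx.1 hx.2
  rcases eq_or_lt_of_le hab with rfl | hlt
  · have : x = (a:ℝ) := le_antisymm hx.2 hx.1
    rw [this]; exact hc a le_rfl le_rfl
  · obtain ⟨k, hka, hkb, hxk⟩ := poly_exists_edge hlt hx
    have h1 : 1 ≤ k := le_trans ha hka
    have h2 : k < n := by omega
    have hmin := (poly_mem_Icc hR h1 h2 hxk).1
    have hc1 : c ≤ R k := hc k hka (by omega)
    have hc2 : c ≤ R ((k:ℝ)+1) := by
      have := hc (k+1) (by omega) hkb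
      rwa [show ((k+1:ℕ):ℝ) = (k:ℝ)+1 by push_cast; ring] at this
    calc c ≤ min (R k) (R ((k:ℝ)+1)) := le_min hc1 hc2
      _ ≤ R x := hmin

lemma poly_bound_above {R : ℝ → ℝ} {n : ℕ} (hR : IsPoly1D R n) {a b : ℕ}
    (ha : 1 ≤ a) (hb : b ≤ n) {c : ℝ}
    (hc : ∀ k : ℕ, a ≤ k → k ≤ b → R k ≤ c) :
    ∀ x ∈ Icc (a:ℝ) (b:ℝ), R x ≤ c := by
  intro x hx
  have hab : a ≤ b := by exact_mod_cast le_trans hx.1 hx.2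
  rcases eq_or_lt_of_le hab with rfl | hlt
  · have : x = (a:ℝ) := le_antisymm hx.2 hx.1
    rw [this]; exact hc a le_rfl le_rfl
  · obtain ⟨k, hka, hkb, hxk⟩ := poly_exists_edge hlt hx
    have h1 : 1 ≤ k := le_trans ha hka
    have h2 : k < n := by omega
    have hmax := (poly_mem_Icc hR h1 h2 hxk).2
    have hc1 : R k ≤ c := hc k hka (by omega)
    have hc2 : R ((k:ℝ)+1) ≤ c := by
      have := hc (k+1) (by omega) hkb
      rwa [show ((k+1:ℕ):ℝ) = (k:ℝ)+1 by push_cast; ring] at this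
    calc R x ≤ max (R k) (R ((k:ℝ)+1)) := hmax
      _ ≤ c := max_le hc1 hc2
/-- Auxiliary: a good suffix matching from state `(k, l)`. -/
def Good (R B : ℝ → ℝ) (D : ℝ) (i j k l : ℕ) : Prop :=
  ∃ f g : ℝ → ℝ, IsRepar1 f (k:ℝ) (i:ℝ) ∧ IsRepar1 g (l:ℝ) (j:ℝ) ∧
    (∀ t ∈ Icc (0:ℝ) 1, |R (f t) - B (g t)| ≤ D) ∧
    (∀ t ∈ Icc (0:ℝ) 1,
      (∀ x ∈ Icc (1:ℝ) (f t), R x ≤ R (f t)) ∨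
      (∀ y ∈ Icc (1:ℝ) (g t), B (g t) ≤ B y))

lemma lin_const (a s : ℝ) : lin a a s = a := by simp [lin]

lemma good_end {R B : ℝ → ℝ} {D : ℝ} {i j : ℕ}
    (hL0 : |R (i:ℝ) - B (j:ℝ)| ≤ D)
    (hpi' : ∀ x ∈ Icc (1:ℝ) (i:ℝ), R x ≤ R (i:ℝ)) :
    Good R B D i j i j := by
  refine ⟨lin (i:ℝ) (i:ℝ), lin (j:ℝ) (j:ℝ), isRepar1_lin le_rfl, isRepar1_lin le_rfl, ?_, ?_⟩
  · intro t ht; rw [lin_const, lin_const]; exact hL0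
  · intro t ht; left; rw [lin_const]; exact hpi'

lemma horiz_step {R B : ℝ → ℝ} {D : ℝ} {i j k k' l : ℕ}
    (hk1 : 1 ≤ k) (hkk' : k ≤ k') (hk'i : k' ≤ i) (hl1 : 1 ≤ l) (hlj : l ≤ j)
    (habs : ∀ x ∈ Icc (1:ℝ) (i:ℝ), ∀ y ∈ Icc (1:ℝ) (j:ℝ), |R x - B y| = B y - R x)
    (hcost : ∀ x ∈ Icc (k:ℝ) (k':ℝ), B (l:ℝ) - R x ≤ D)
    (hprefB : ∀ y ∈ Icc (1:ℝ) (l:ℝ), B (l:ℝ) ≤ B y)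
    (hsuf : Good R B D i j k' l) : Good R B D i j k l := by
  obtain ⟨f2, g2, hf2, hg2, hc2, hp2⟩ := hsuf
  have hkk'r : (k:ℝ) ≤ (k':ℝ) := by exact_mod_cast hkk'
  have hlj' : (l:ℝ) ∈ Icc (1:ℝ) (j:ℝ) :=
    ⟨by exact_mod_cast hl1, by exact_mod_cast hlj⟩
  refine ⟨glue (lin (k:ℝ) (k':ℝ)) f2, glue (lin (l:ℝ) (l:ℝ)) g2,
    isRepar1_glue (isRepar1_lin hkk'r) hf2,
    isRepar1_glue (isRepar1_lin le_rfl) hg2, ?_, ?_⟩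
  · intro t ht
    obtain ⟨s, hs, hcase | hcase⟩ := glue_cases (lin (k:ℝ) (k':ℝ)) f2 (lin (l:ℝ) (l:ℝ)) g2 ht
    · rw [hcase.1, hcase.2, lin_const]
      have hmem := lin_mem hkk'r hs
      have hmem' : lin (k:ℝ) (k':ℝ) s ∈ Icc (1:ℝ) (i:ℝ) :=
        ⟨le_trans (by exact_mod_cast hk1) hmem.1, le_trans hmem.2 (by exact_mod_cast hk'i)⟩
      rw [habs _ hmem' _ hlj']
      exact hcost _ hmem
    · rw [hcase.1, hcase.2]; exact hc2 s hs
  · intro t ht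
    obtain ⟨s, hs, hcase | hcase⟩ := glue_cases (lin (k:ℝ) (k':ℝ)) f2 (lin (l:ℝ) (l:ℝ)) g2 ht
    · right; rw [hcase.2, lin_const]; exact hprefB
    · rw [hcase.1, hcase.2]; exact hp2 s hs

lemma vert_step {R B : ℝ → ℝ} {D : ℝ} {i j k l l' : ℕ}
    (hk1 : 1 ≤ k) (hki : k ≤ i) (hl1 : 1 ≤ l) (hll' : l ≤ l') (hl'j : l' ≤ j)
    (habs : ∀ x ∈ Icc (1:ℝ) (i:ℝ), ∀ y ∈ Icc (1:ℝ) (j:ℝ), |R x - B y| = B y - R x)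
    (hcost : ∀ y ∈ Icc (l:ℝ) (l':ℝ), B y - R (k:ℝ) ≤ D)
    (hprefR : ∀ x ∈ Icc (1:ℝ) (k:ℝ), R x ≤ R (k:ℝ))
    (hsuf : Good R B D i j k l') : Good R B D i j k l := by
  obtain ⟨f2, g2, hf2, hg2, hc2, hp2⟩ := hsuf
  have hll'r : (l:ℝ) ≤ (l':ℝ) := by exact_mod_cast hll'
  have hki' : (k:ℝ) ∈ Icc (1:ℝ) (i:ℝ) :=
    ⟨by exact_mod_cast hk1, by exact_mod_cast hki⟩
  refine ⟨glue (lin (k:ℝ) (k:ℝ)) f2, glue (lin (l:ℝ) (l':ℝ)) g2,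
    isRepar1_glue (isRepar1_lin le_rfl) hf2,
    isRepar1_glue (isRepar1_lin hll'r) hg2, ?_, ?_⟩
  · intro t ht
    obtain ⟨s, hs, hcase | hcase⟩ := glue_cases (lin (k:ℝ) (k:ℝ)) f2 (lin (l:ℝ) (l':ℝ)) g2 ht
    · rw [hcase.1, hcase.2, lin_const]
      have hmem := lin_mem hll'r hs
      have hmem' : lin (l:ℝ) (l':ℝ) s ∈ Icc (1:ℝ) (j:ℝ) :=
        ⟨le_trans (by exact_mod_cast hl1) hmem.1, le_trans hmem.2 (by exact_mod_cast hl'j)⟩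
      rw [habs _ hki' _ hmem']
      exact hcost _ hmem
    · rw [hcase.1, hcase.2]; exact hc2 s hs
  · intro t ht
    obtain ⟨s, hs, hcase | hcase⟩ := glue_cases (lin (k:ℝ) (k:ℝ)) f2 (lin (l:ℝ) (l':ℝ)) g2 ht
    · left; rw [hcase.1, lin_const]; exact hprefR
    · rw [hcase.1, hcase.2]; exact hp2 s hs

/-- For prefix-minimum vertices `R i` and `B j` there is a
prefix-minima Fréchet matching between `R|[1, i]` and `B|[1, j]`: a matching of
cost at most `d_F(R|[1,i], B|[1,j])` such that at each time, at least one of the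
two matched points is a prefix-minimum point of its curve. -/
theorem exists_prefix_minima_matching
    (n m : ℕ) (hn : 1 ≤ n) (hm : 1 ≤ m)
    (R B : ℝ → ℝ) (hR : IsPoly1D R n) (hB : IsPoly1D B m)
    (hsepR : ∀ x ∈ Icc (1:ℝ) n, R x ≤ 0) (hsepB : ∀ y ∈ Icc (1:ℝ) m, 0 ≤ B y)
    (i j : ℕ) (hi1 : 1 ≤ i) (hin : i ≤ n) (hj1 : 1 ≤ j) (hjm : j ≤ m)
    (hpi : ∀ x ∈ Icc (1:ℝ) (i : ℝ), |R (i : ℝ)| ≤ |R x|)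
    (hpj : ∀ y ∈ Icc (1:ℝ) (j : ℝ), |B (j : ℝ)| ≤ |B y|) :
    ∃ f g : ℝ → ℝ, IsRepar1 f 1 (i : ℝ) ∧ IsRepar1 g 1 (j : ℝ) ∧
      (∀ t ∈ Icc (0:ℝ) 1, |R (f t) - B (g t)| ≤ dF1 R B 1 (i : ℝ) 1 (j : ℝ)) ∧
      ∀ t ∈ Icc (0:ℝ) 1,
        (∀ x ∈ Icc (1:ℝ) (f t), R x ≤ R (f t)) ∨
        (∀ y ∈ Icc (1:ℝ) (g t), B (g t) ≤ B y) := by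
  classical
  set D := dF1 R B 1 (i:ℝ) 1 (j:ℝ) with hDdef
  have hi1' : (1:ℝ) ≤ (i:ℝ) := by exact_mod_cast hi1
  have hj1' : (1:ℝ) ≤ (j:ℝ) := by exact_mod_cast hj1
  have hin' : (i:ℝ) ≤ (n:ℝ) := by exact_mod_cast hin
  have hjm' : (j:ℝ) ≤ (m:ℝ) := by exact_mod_cast hjm
  have hsubi : Icc (1:ℝ) (i:ℝ) ⊆ Icc (1:ℝ) (n:ℝ) := Icc_subset_Icc le_rfl hin'
  have hsubj : Icc (1:ℝ) (j:ℝ) ⊆ Icc (1:ℝ) (m:ℝ) := Icc_subset_Icc le_rfl hjm'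
  have hRneg : ∀ x ∈ Icc (1:ℝ) (i:ℝ), R x ≤ 0 := fun x hx => hsepR x (hsubi hx)
  have hBpos : ∀ y ∈ Icc (1:ℝ) (j:ℝ), 0 ≤ B y := fun y hy => hsepB y (hsubj hy)
  have himem : (i:ℝ) ∈ Icc (1:ℝ) (i:ℝ) := ⟨hi1', le_rfl⟩
  have hjmem : (j:ℝ) ∈ Icc (1:ℝ) (j:ℝ) := ⟨hj1', le_rfl⟩
  have hpi' : ∀ x ∈ Icc (1:ℝ) (i:ℝ), R x ≤ R (i:ℝ) := by
    intro x hx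
    have h1 := hpi x hx
    rw [abs_of_nonpos (hRneg _ himem), abs_of_nonpos (hRneg x hx)] at h1
    linarith
  have hpj' : ∀ y ∈ Icc (1:ℝ) (j:ℝ), B (j:ℝ) ≤ B y := by
    intro y hy
    have h1 := hpj y hy
    rwa [abs_of_nonneg (hBpos _ hjmem), abs_of_nonneg (hBpos y hy)] at h1
  have hpiv : ∀ p : ℕ, 1 ≤ p → p ≤ i → R (p:ℝ) ≤ R (i:ℝ) :=
    fun p h1 h2 => hpi' _ ⟨by exact_mod_cast h1, by exact_mod_cast h2⟩
  have hpjv : ∀ q : ℕ, 1 ≤ q → q ≤ j → B (j:ℝ) ≤ B (q:ℝ) :=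
    fun q h1 h2 => hpj' _ ⟨by exact_mod_cast h1, by exact_mod_cast h2⟩
  have habs : ∀ x ∈ Icc (1:ℝ) (i:ℝ), ∀ y ∈ Icc (1:ℝ) (j:ℝ), |R x - B y| = B y - R x := by
    intro x hx y hy
    rw [abs_sub_comm, abs_of_nonneg (by linarith [hRneg x hx, hBpos y hy])]
  have hCR : ∃ C : ℝ, ∀ x ∈ Icc (1:ℝ) (i:ℝ), |R x| ≤ C := by
    have hne : (Finset.Icc 1 i).Nonempty := ⟨1, Finset.mem_Icc.mpr ⟨le_rfl, hi1⟩⟩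
    refine ⟨(Finset.Icc 1 i).sup' hne (fun p => |R (p:ℝ)|), fun x hx => ?_⟩
    rw [abs_le]
    constructor
    · refine poly_bound_below hR le_rfl hin (fun p hp1 hp2 => ?_) x (by simpa using hx)
      have := Finset.le_sup' (fun p : ℕ => |R (p:ℝ)|) (Finset.mem_Icc.mpr ⟨hp1, hp2⟩)
      have h2 := neg_abs_le (R (p:ℝ))
      linarith
    · refine poly_bound_above hR le_rfl hin (fun p hp1 hp2 => ?_) x (by simpa using hx)
      exact le_trans (le_abs_self _)
        (Finset.le_sup' (fun p : ℕ => |R (p:ℝ)|) (Finset.mem_Icc.mpr ⟨hp1, hp2⟩))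
  have hCB : ∃ C : ℝ, ∀ y ∈ Icc (1:ℝ) (j:ℝ), |B y| ≤ C := by
    have hne : (Finset.Icc 1 j).Nonempty := ⟨1, Finset.mem_Icc.mpr ⟨le_rfl, hj1⟩⟩
    refine ⟨(Finset.Icc 1 j).sup' hne (fun q => |B (q:ℝ)|), fun y hy => ?_⟩
    rw [abs_le]
    constructor
    · refine poly_bound_below hB le_rfl hjm (fun q hq1 hq2 => ?_) y (by simpa using hy)
      have := Finset.le_sup' (fun q : ℕ => |B (q:ℝ)|) (Finset.mem_Icc.mpr ⟨hq1, hq2⟩)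
      have h2 := neg_abs_le (B (q:ℝ))
      linarith
    · refine poly_bound_above hB le_rfl hjm (fun q hq1 hq2 => ?_) y (by simpa using hy)
      exact le_trans (le_abs_self _)
        (Finset.le_sup' (fun q : ℕ => |B (q:ℝ)|) (Finset.mem_Icc.mpr ⟨hq1, hq2⟩))
  have hmatch : ∀ f g : ℝ → ℝ, IsRepar1 f 1 (i:ℝ) → IsRepar1 g 1 (j:ℝ) →
      ∀ t ∈ Icc (0:ℝ) 1, |R (f t) - B (g t)| ≤ cost1 R B f g := by
    intro f g hf hg t ht
    obtain ⟨CR, hCRb⟩ := hCR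
    obtain ⟨CB, hCBb⟩ := hCB
    apply le_csSup
    · refine ⟨CR + CB, ?_⟩
      rintro c ⟨s, hs, rfl⟩
      have h1 := hCRb _ (hf.2.1 hs)
      have h2 := hCBb _ (hg.2.1 hs)
      have h3 : |R (f s) - B (g s)| ≤ |R (f s)| + |B (g s)| := by
        have := abs_add_le (R (f s)) (-(B (g s)))
        simpa [sub_eq_add_neg] using this
      linarith
    · exact ⟨t, ht, rfl⟩
  have hSne : {x : ℝ | ∃ f g : ℝ → ℝ, IsRepar1 f 1 (i:ℝ) ∧ IsRepar1 g 1 (j:ℝ) ∧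
      x = cost1 R B f g}.Nonempty :=
    ⟨cost1 R B (lin 1 (i:ℝ)) (lin 1 (j:ℝ)), lin 1 (i:ℝ), lin 1 (j:ℝ),
      isRepar1_lin hi1', isRepar1_lin hj1', rfl⟩
  have hDlb : ∀ c : ℝ,
      (∀ f g : ℝ → ℝ, IsRepar1 f 1 (i:ℝ) → IsRepar1 g 1 (j:ℝ) → c ≤ cost1 R B f g) →
      c ≤ D := by
    intro c hc
    refine le_csInf hSne ?_
    rintro x ⟨f, g, hf, hg, rfl⟩
    exact hc f g hf hg
  have hL0 : |R (i:ℝ) - B (j:ℝ)| ≤ D := by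
    refine hDlb _ fun f g hf hg => ?_
    have h1 := hmatch f g hf hg 1 (by norm_num)
    rwa [repar_right_end hf, repar_right_end hg] at h1
  have hL1 : ∀ x ∈ Icc (1:ℝ) (i:ℝ), B (j:ℝ) - R x ≤ D := by
    intro x hx
    refine hDlb _ fun f g hf hg => ?_
    obtain ⟨t, ht, hft⟩ := hf.2.2 hx
    have h1 := hmatch f g hf hg t ht
    rw [hft, habs x hx _ (hg.2.1 ht)] at h1
    have h2 := hpj' _ (hg.2.1 ht)
    linarith
  have hL2 : ∀ y ∈ Icc (1:ℝ) (j:ℝ), B y - R (i:ℝ) ≤ D := by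
    intro y hy
    refine hDlb _ fun f g hf hg => ?_
    obtain ⟨t, ht, hgt⟩ := hg.2.2 hy
    have h1 := hmatch f g hf hg t ht
    rw [hgt, habs _ (hf.2.1 ht) y hy] at h1
    have h2 := hpi' _ (hf.2.1 ht)
    linarith
  have hL3 : ∀ p q : ℕ, 1 ≤ p → p ≤ i → 1 ≤ q → q ≤ j → ∀ cR cB : ℝ,
      (∀ x ∈ Icc (1:ℝ) (p:ℝ), R x ≤ cR) → (∀ y ∈ Icc (1:ℝ) (q:ℝ), cB ≤ B y) →
      min (cB - R (p:ℝ)) (B (q:ℝ) - cR) ≤ D := by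
    intro p q hp1 hpi2 hq1 hqj cR cB hcR hcB
    refine hDlb _ fun f g hf hg => ?_
    have hpmem : (p:ℝ) ∈ Icc (1:ℝ) (i:ℝ) := ⟨by exact_mod_cast hp1, by exact_mod_cast hpi2⟩
    have hqmem : (q:ℝ) ∈ Icc (1:ℝ) (j:ℝ) := ⟨by exact_mod_cast hq1, by exact_mod_cast hqj⟩
    obtain ⟨t1, ht1, hft1⟩ := hf.2.2 hpmem
    obtain ⟨t2, ht2, hgt2⟩ := hg.2.2 hqmem
    rcases le_total t1 t2 with h | h
    · have h1 := hmatch f g hf hg t1 ht1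
      rw [hft1, habs _ hpmem _ (hg.2.1 ht1)] at h1
      have h2 : g t1 ≤ (q:ℝ) := by rw [← hgt2]; exact hg.1 ht1 ht2 h
      have h3 : cB ≤ B (g t1) := hcB _ ⟨(hg.2.1 ht1).1, h2⟩
      have := min_le_left (cB - R (p:ℝ)) (B (q:ℝ) - cR)
      linarith
    · have h1 := hmatch f g hf hg t2 ht2
      rw [hgt2, habs _ (hf.2.1 ht2) _ hqmem] at h1
      have h2 : f t2 ≤ (p:ℝ) := by rw [← hft1]; exact hf.1 ht2 ht1 h
      have h3 : R (f t2) ≤ cR := hcR _ ⟨(hf.2.1 ht2).1, h2⟩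
      have := min_le_right (cB - R (p:ℝ)) (B (q:ℝ) - cR)
      linarith
  -- main greedy induction
  have key : ∀ N k l : ℕ, 1 ≤ k → k ≤ i → 1 ≤ l → l ≤ j → (i - k) + (j - l) ≤ N →
      (∀ k' : ℕ, 1 ≤ k' → k' ≤ k → R (k':ℝ) ≤ R (k:ℝ)) →
      (∀ l' : ℕ, 1 ≤ l' → l' ≤ l → B (l:ℝ) ≤ B (l':ℝ)) →
      Good R B D i j k l := by
    intro N
    induction N with
    | zero =>
      intro k l hk1 hki hl1 hlj hN hPmax hPmin
      have hki' : k = i := by omega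
      have hlj' : l = j := by omega
      subst hki'; subst hlj'
      exact good_end hL0 hpi'
    | succ N ih =>
      intro k l hk1 hki hl1 hlj hN hPmax hPmin
      have hk1r : (1:ℝ) ≤ (k:ℝ) := by exact_mod_cast hk1
      have hl1r : (1:ℝ) ≤ (l:ℝ) := by exact_mod_cast hl1
      have hprefR : ∀ x ∈ Icc (1:ℝ) (k:ℝ), R x ≤ R (k:ℝ) := by
        have := poly_bound_above hR le_rfl (le_trans hki hin) hPmax
        intro x hx; exact this x (by simpa using hx)
      have hprefB : ∀ y ∈ Icc (1:ℝ) (l:ℝ), B (l:ℝ) ≤ B y := by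
        have := poly_bound_below hB le_rfl (le_trans hlj hjm) hPmin
        intro y hy; exact this y (by simpa using hy)
      by_cases hkeq : k = i
      · subst hkeq
        by_cases hleq : l = j
        · subst hleq; exact good_end hL0 hpi'
        · refine vert_step hk1 le_rfl hl1 hlj le_rfl habs ?_ hprefR (good_end hL0 hpi')
          intro y hy
          exact hL2 y ⟨le_trans hl1r hy.1, hy.2⟩
      · have hkilt : k < i := lt_of_le_of_ne hki hkeq
        by_cases hleq : l = j
        · subst hleq
          refine horiz_step hk1 hki le_rfl hj1 le_rfl habs ?_ hpj' (good_end hL0 hpi')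
          intro x hx
          exact hL1 x ⟨le_trans hk1r hx.1, hx.2⟩
        · have hjlt : l < j := lt_of_le_of_ne hlj hleq
          by_cases hRrec : ∃ k'' : ℕ, k < k'' ∧ k'' ≤ i ∧ R (k:ℝ) < R (k'':ℝ)
          case neg =>
            push_neg at hRrec
            have hRki : R (k:ℝ) = R (i:ℝ) := by
              refine le_antisymm (hpiv k hk1 hki) (hRrec i hkilt le_rfl)
            refine vert_step hk1 hki hl1 hlj le_rfl habs ?_ hprefR ?_
            · intro y hy
              have := hL2 y ⟨le_trans hl1r hy.1, hy.2⟩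
              rw [hRki]; linarith
            · exact ih k j hk1 hki hj1 le_rfl (by omega) hPmax hpjv
          case pos =>
          by_cases hBrec : ∃ l'' : ℕ, l < l'' ∧ l'' ≤ j ∧ B (l'':ℝ) < B (l:ℝ)
          case neg =>
            push_neg at hBrec
            have hBlj : B (l:ℝ) = B (j:ℝ) :=
              le_antisymm (hBrec j hjlt le_rfl) (hpjv l hl1 hlj)
            refine horiz_step hk1 hki le_rfl hl1 hlj habs ?_ hprefB ?_
            · intro x hx
              have := hL1 x ⟨le_trans hk1r hx.1, hx.2⟩
              rw [hBlj]; linarith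
            · exact ih i l hi1 le_rfl hl1 hlj (by omega) hpiv hPmin
          case pos =>
          -- both records exist
          set x' := Nat.find hRrec with hx'def
          obtain ⟨hx'1, hx'2, hx'3⟩ := Nat.find_spec hRrec
          have hbetR : ∀ k'' : ℕ, k < k'' → k'' < x' → R (k'':ℝ) ≤ R (k:ℝ) := by
            intro k'' h1 h2
            by_contra h
            push_neg at h
            exact Nat.find_min hRrec h2 ⟨h1, by omega, h⟩
          set y' := Nat.find hBrec with hy'def
          obtain ⟨hy'1, hy'2, hy'3⟩ := Nat.find_spec hBrec
          have hbetB : ∀ l'' : ℕ, l < l'' → l'' < y' → B (l:ℝ) ≤ B (l'':ℝ) := by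
            intro l'' h1 h2
            by_contra h
            push_neg at h
            exact Nat.find_min hBrec h2 ⟨h1, by omega, h⟩
          obtain ⟨xm, hxmmem, hxmmin⟩ := Finset.exists_min_image (Finset.Icc k (x'-1))
            (fun p : ℕ => R (p:ℝ)) ⟨k, Finset.mem_Icc.mpr ⟨le_rfl, by omega⟩⟩
          rw [Finset.mem_Icc] at hxmmem
          obtain ⟨yp, hypmem, hypmax⟩ := Finset.exists_max_image (Finset.Icc l (y'-1))
            (fun q : ℕ => B (q:ℝ)) ⟨l, Finset.mem_Icc.mpr ⟨le_rfl, by omega⟩⟩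
          rw [Finset.mem_Icc] at hypmem
          have hxm1 : 1 ≤ xm := le_trans hk1 hxmmem.1
          have hxmi : xm ≤ i := by omega
          have hyp1 : 1 ≤ yp := le_trans hl1 hypmem.1
          have hypj : yp ≤ j := by omega
          have hRxm_le : R (xm:ℝ) ≤ R (k:ℝ) :=
            hxmmin k (Finset.mem_Icc.mpr ⟨le_rfl, by omega⟩)
          have hByp_ge : B (l:ℝ) ≤ B (yp:ℝ) :=
            hypmax l (Finset.mem_Icc.mpr ⟨le_rfl, by omega⟩)
          have hcRreal : ∀ x ∈ Icc (1:ℝ) (xm:ℝ), R x ≤ R (k:ℝ) := by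
            have : ∀ p : ℕ, 1 ≤ p → p ≤ xm → R (p:ℝ) ≤ R (k:ℝ) := by
              intro p h1 h2
              rcases le_or_gt p k with h | h
              · exact hPmax p h1 h
              · exact hbetR p h (by omega)
            have h2 := poly_bound_above hR le_rfl (le_trans hxmi hin) this
            intro x hx; exact h2 x (by simpa using hx)
          have hcBreal : ∀ y ∈ Icc (1:ℝ) (yp:ℝ), B (l:ℝ) ≤ B y := by
            have : ∀ q : ℕ, 1 ≤ q → q ≤ yp → B (l:ℝ) ≤ B (q:ℝ) := by
              intro q h1 h2
              rcases le_or_gt q l with h | h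
              · exact hPmin q h1 h
              · exact hbetB q h (by omega)
            have h2 := poly_bound_below hB le_rfl (le_trans hypj hjm) this
            intro y hy; exact h2 y (by simpa using hy)
          by_cases hsafe : B (l:ℝ) - R (xm:ℝ) ≤ D
          · -- horizontal phase k → x'
            refine horiz_step hk1 (le_of_lt hx'1) hx'2 hl1 hlj habs ?_ hprefB ?_
            · have hlow : ∀ x ∈ Icc (k:ℝ) (x':ℝ), R (xm:ℝ) ≤ R x := by
                refine poly_bound_below hR hk1 (le_trans hx'2 hin) ?_
                intro p h1 h2
                rcases eq_or_lt_of_le h2 with rfl | hlt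
                · exact le_trans hRxm_le (le_of_lt hx'3)
                · exact hxmmin p (Finset.mem_Icc.mpr ⟨h1, by omega⟩)
              intro x hx
              have := hlow x hx
              linarith
            · refine ih x' l (by omega) hx'2 hl1 hlj (by omega) ?_ hPmin
              intro k'' h1 h2
              rcases eq_or_lt_of_le h2 with rfl | hlt
              · exact le_rfl
              · rcases le_or_gt k'' k with h | h
                · exact le_trans (hPmax k'' h1 h) (le_of_lt hx'3)
                · exact le_trans (hbetR k'' h hlt) (le_of_lt hx'3)
          · -- vertical phase l → y'
            have hMD : B (yp:ℝ) - R (k:ℝ) ≤ D := by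
              have h3 := hL3 xm yp hxm1 hxmi hyp1 hypj (R (k:ℝ)) (B (l:ℝ)) hcRreal hcBreal
              rcases min_le_iff.mp h3 with h | h
              · exact absurd h hsafe
              · exact h
            refine vert_step hk1 hki hl1 (le_of_lt hy'1) hy'2 habs ?_ hprefR ?_
            · have hup : ∀ y ∈ Icc (l:ℝ) (y':ℝ), B y ≤ B (yp:ℝ) := by
                refine poly_bound_above hB hl1 (le_trans hy'2 hjm) ?_
                intro q h1 h2
                rcases eq_or_lt_of_le h2 with rfl | hlt
                · exact le_trans (le_of_lt hy'3) hByp_ge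
                · exact hypmax q (Finset.mem_Icc.mpr ⟨h1, by omega⟩)
              intro y hy
              have := hup y hy
              linarith
            · refine ih k y' hk1 hki (by omega) hy'2 (by omega) hPmax ?_
              intro l'' h1 h2
              rcases eq_or_lt_of_le h2 with rfl | hlt
              · exact le_rfl
              · rcases le_or_gt l'' l with h | h
                · exact le_trans (le_of_lt hy'3) (hPmin l'' h1 h)
                · exact le_trans (le_of_lt hy'3) (hbetB l'' h hlt)
  have hfinal := key ((i - 1) + (j - 1)) 1 1 le_rfl hi1 le_rfl hj1 (by omega)
    (fun k' h1 h2 => by rw [le_antisymm h2 h1]) (fun l' h1 h2 => by rw [le_antisymm h2 h1])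
  obtain ⟨f, g, hf, hg, hc, hp⟩ := hfinal
  exact ⟨f, g, by simpa using hf, by simpa using hg, hc, hp⟩
end
end

section
/- Let s = (i, j) ∈ F_δ be an integer point, let t = (i', j') be an integer point that is the endpoint of some prefix-minima δ-matching starting at s, and let π be a maximal horizontal-greedy δ-matching starting at s. Then there exists a point t̂ = (i', ĵ) on π with ĵ ≤ j' such that the vertical segment {i'} × [ĵ, j'] is contained in F_δ. -/
open Set

noncomputable section

/-- General position: the vertex values are pairwise distinct. -/
def GeneralPosition (R : ℝ → ℝ) (n : ℕ) : Prop :=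
  ∀ k l : ℕ, 1 ≤ k → k ≤ n → 1 ≤ l → l ≤ n → k ≠ l → R (k : ℝ) ≠ R (l : ℝ)

/-- The `δ`-free space `F_δ = {(x,y) ∈ [1,n] × [1,m] : B y − R x ≤ δ}`. -/
def freeSpace (R B : ℝ → ℝ) (n m : ℕ) (δ : ℝ) : Set (ℝ × ℝ) :=
  {p : ℝ × ℝ | p.1 ∈ Icc (1:ℝ) (n : ℝ) ∧ p.2 ∈ Icc (1:ℝ) (m : ℝ) ∧ B p.2 - R p.1 ≤ δ}

/-- `A i'` is a prefix-minimum of `A[i, ∞)`: `|A i'| ≤ |A x|` for all `x ∈ [i, i']`. -/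
def PrefixMin (A : ℝ → ℝ) (i i' : ℤ) : Prop :=
  i ≤ i' ∧ ∀ x ∈ Icc (i : ℝ) (i' : ℝ), |A (i' : ℝ)| ≤ |A x|

/-- A rectilinear path, given by its sequence of vertices (endpoints and
turning points). -/
structure RectPath where
  N : ℕ
  vert : Fin (N + 1) → ℝ × ℝ

/-- The last vertex (endpoint) of a rectilinear path. -/
def RectPath.last (π : RectPath) : ℝ × ℝ := π.vert (Fin.last π.N)

/-- The image of a rectilinear path: the union of the segments between
consecutive vertices. -/
def RectPath.image (π : RectPath) : Set (ℝ × ℝ) :=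
  insert (π.vert 0) (⋃ k : Fin π.N, segment ℝ (π.vert k.castSucc) (π.vert k.succ))

/-- Each edge of the path is an axis-parallel segment, and the path is
nondecreasing in both coordinates. -/
def RectPath.IsRectilinear (π : RectPath) : Prop :=
  ∀ k : Fin π.N,
    ((π.vert k.castSucc).1 = (π.vert k.succ).1 ∧ (π.vert k.castSucc).2 < (π.vert k.succ).2) ∨
    ((π.vert k.castSucc).2 = (π.vert k.succ).2 ∧ (π.vert k.castSucc).1 < (π.vert k.succ).1)

/-- A prefix-minima `δ`-matching starting at the integer point `s = (i, j)`:
a monotone rectilinear path inside the `δ`-free space starting at `s`, all of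
whose vertices are integer points `(i', j')` with `R i'` a prefix-minimum of
`R[i, n]` and `B j'` a prefix-minimum of `B[j, m]`. -/
def IsPMMatching (R B : ℝ → ℝ) (n m : ℕ) (δ : ℝ) (s : ℤ × ℤ) (π : RectPath) : Prop :=
  π.IsRectilinear ∧
  π.vert 0 = ((s.1 : ℝ), (s.2 : ℝ)) ∧
  π.image ⊆ freeSpace R B n m δ ∧
  ∀ k : Fin (π.N + 1), ∃ i' j' : ℤ,
    π.vert k = ((i' : ℝ), (j' : ℝ)) ∧ PrefixMin R s.1 i' ∧ PrefixMin B s.2 j'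

/-- A horizontal-greedy `δ`-matching starting at `s`: a prefix-minima
`δ`-matching that, from any integer prefix-minima point `(i', j')` on it, either
traverses any available horizontal free-space segment `[i', î] × {j'}` towards a
further prefix-minimum `R î`, or terminates at `(i', j')`. -/
def IsHorizGreedy (R B : ℝ → ℝ) (n m : ℕ) (δ : ℝ) (s : ℤ × ℤ) (π : RectPath) : Prop :=
  IsPMMatching R B n m δ s π ∧
  ∀ i' j' : ℤ, ((i' : ℝ), (j' : ℝ)) ∈ π.image →
    PrefixMin R s.1 i' → PrefixMin B s.2 j' →
    ∀ ihat : ℤ, i' < ihat → PrefixMin R s.1 ihat →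
      (Icc (i' : ℝ) (ihat : ℝ) ×ˢ ({(j' : ℝ)} : Set ℝ) ⊆ freeSpace R B n m δ) →
      (Icc (i' : ℝ) (ihat : ℝ) ×ˢ ({(j' : ℝ)} : Set ℝ) ⊆ π.image ∨
        π.last = ((i' : ℝ), (j' : ℝ)))

/-- `C(π)`: the set of integers `i` such that `π` has a vertical edge contained
in the line `x = i`. -/
def vertLines (π : RectPath) : Set ℤ :=
  {i : ℤ | ∃ k : Fin π.N, (π.vert k.castSucc).1 = (i : ℝ) ∧
    (π.vert k.castSucc).1 = (π.vert k.succ).1}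

/-- `R(π)`: the set of integers `j` such that `π` has a horizontal edge contained
in the line `y = j`. -/
def horizLines (π : RectPath) : Set ℤ :=
  {j : ℤ | ∃ k : Fin π.N, (π.vert k.castSucc).2 = (j : ℝ) ∧
    (π.vert k.castSucc).2 = (π.vert k.succ).2}

/-- Two paths are interior-disjoint if their images share no point that is, for
both paths, distinct from that path's two endpoints. -/
def InteriorDisjoint (π π' : RectPath) : Prop :=
  ∀ p ∈ π.image ∩ π'.image,
    (p = π.vert 0 ∨ p = π.last) ∨ (p = π'.vert 0 ∨ p = π'.last)

/-- A horizontal-greedy `δ`-matching starting at `s` is maximal if it is not a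
proper initial portion of another horizontal-greedy `δ`-matching starting at `s`. -/
def IsMaximalHG (R B : ℝ → ℝ) (n m : ℕ) (δ : ℝ) (s : ℤ × ℤ) (π : RectPath) : Prop :=
  IsHorizGreedy R B n m δ s π ∧
  ∀ π' : RectPath, IsHorizGreedy R B n m δ s π' → π.image ⊆ π'.image →
    π'.image = π.image

lemma horiz_seg {x1 x2 h : ℝ} (hx : x1 ≤ x2) :
    segment ℝ ((x1, h) : ℝ × ℝ) (x2, h) = Icc x1 x2 ×ˢ ({h} : Set ℝ) := by
  ext ⟨p1, p2⟩
  constructor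
  · rintro ⟨a, b, ha, hb, hab, heq⟩
    have h1 : a * x1 + b * x2 = p1 := congrArg Prod.fst heq
    have h2 : a * h + b * h = p2 := congrArg Prod.snd heq
    have hp2 : p2 = h := by rw [← h2, ← add_mul, hab, one_mul]
    refine ⟨?_, by simpa using hp2⟩
    have : p1 ∈ segment ℝ x1 x2 := ⟨a, b, ha, hb, hab, h1⟩
    rwa [segment_eq_Icc hx] at this
  · rintro ⟨hp1, hp2⟩
    simp only [mem_singleton_iff] at hp2
    subst hp2
    rw [← segment_eq_Icc hx] at hp1
    obtain ⟨a, b, ha, hb, hab, heq⟩ := hp1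
    refine ⟨a, b, ha, hb, hab, Prod.ext (by simpa using heq) ?_⟩
    show a * p2 + b * p2 = p2
    rw [← add_mul, hab, one_mul]

lemma vert_seg {x y1 y2 : ℝ} (hy : y1 ≤ y2) :
    segment ℝ ((x, y1) : ℝ × ℝ) (x, y2) = ({x} : Set ℝ) ×ˢ Icc y1 y2 := by
  ext ⟨p1, p2⟩
  constructor
  · rintro ⟨a, b, ha, hb, hab, heq⟩
    have h1 : a * x + b * x = p1 := congrArg Prod.fst heq
    have h2 : a * y1 + b * y2 = p2 := congrArg Prod.snd heq
    have hp1 : p1 = x := by rw [← h1, ← add_mul, hab, one_mul]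
    refine ⟨by simpa using hp1, ?_⟩
    have : p2 ∈ segment ℝ y1 y2 := ⟨a, b, ha, hb, hab, h2⟩
    rwa [segment_eq_Icc hy] at this
  · rintro ⟨hp1, hp2⟩
    simp only [mem_singleton_iff] at hp1
    subst hp1
    rw [← segment_eq_Icc hy] at hp2
    obtain ⟨a, b, ha, hb, hab, heq⟩ := hp2
    refine ⟨a, b, ha, hb, hab, Prod.ext ?_ (by simpa using heq)⟩
    show a * p1 + b * p1 = p1
    rw [← add_mul, hab, one_mul]

lemma pair_int_eq {i j x h : ℤ} (he : (((i:ℝ), (j:ℝ)) : ℝ × ℝ) = ((x:ℝ), (h:ℝ))) :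
    i = x ∧ j = h := by
  rw [Prod.mk.injEq] at he
  exact ⟨by exact_mod_cast he.1, by exact_mod_cast he.2⟩

lemma RectPath.vert_monotone {π : RectPath} (h : π.IsRectilinear) : Monotone π.vert := by
  rw [Fin.monotone_iff_le_succ]
  intro k
  rcases h k with ⟨h1, h2⟩ | ⟨h1, h2⟩
  · exact Prod.le_def.mpr ⟨le_of_eq h1, le_of_lt h2⟩
  · exact Prod.le_def.mpr ⟨le_of_lt h2, le_of_eq h1⟩

lemma RectPath.mem_image_vert (π : RectPath) (k : Fin (π.N + 1)) : π.vert k ∈ π.image := by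
  rcases Fin.eq_zero_or_eq_succ k with rfl | ⟨j, rfl⟩
  · exact mem_insert _ _
  · exact mem_insert_of_mem _ (mem_iUnion.2 ⟨j, right_mem_segment ℝ _ _⟩)

lemma RectPath.last_mem_image (π : RectPath) : π.last ∈ π.image := π.mem_image_vert _

lemma RectPath.image_le_last {π : RectPath} (h : π.IsRectilinear) {p : ℝ × ℝ}
    (hp : p ∈ π.image) : p ≤ π.last := by
  have hm := RectPath.vert_monotone h
  rcases hp with rfl | hp
  · exact hm (Fin.zero_le _)
  · obtain ⟨k, hk⟩ := mem_iUnion.1 hp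
    have hle : p ≤ π.vert k.succ := by
      rcases h k with ⟨h1, h2⟩ | ⟨h1, h2⟩
      · have hv : π.vert k.succ = ((π.vert k.castSucc).1, (π.vert k.succ).2) :=
          Prod.ext h1.symm rfl
        rw [show π.vert k.castSucc = ((π.vert k.castSucc).1, (π.vert k.castSucc).2) from rfl,
          hv, vert_seg h2.le] at hk
        exact Prod.le_def.mpr ⟨le_of_eq (((by simpa using hk.1) : p.1 = (π.vert k.castSucc).1).trans h1), by
          rw [hv]; exact hk.2.2⟩
      · have hv : π.vert k.succ = ((π.vert k.succ).1, (π.vert k.castSucc).2) :=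
          Prod.ext rfl h1.symm
        rw [show π.vert k.castSucc = ((π.vert k.castSucc).1, (π.vert k.castSucc).2) from rfl,
          hv, horiz_seg h2.le] at hk
        exact Prod.le_def.mpr ⟨by rw [hv]; exact hk.1.2, le_of_eq (by
          have := hk.2; simp only [mem_singleton_iff] at this
          rw [this, hv])⟩
    exact hle.trans (hm (Fin.le_last _))

/-- Extend a path by one extra vertex. -/
abbrev RectPath.ext (π : RectPath) (q : ℝ × ℝ) : RectPath := ⟨π.N + 1, Fin.snoc π.vert q⟩

lemma RectPath.ext_vert_castSucc (π : RectPath) (q : ℝ × ℝ) (k : Fin (π.N + 1)) :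
    (π.ext q).vert k.castSucc = π.vert k := by
  show Fin.snoc (α := fun _ => ℝ × ℝ) π.vert q k.castSucc = π.vert k
  exact Fin.snoc_castSucc _ _ _

lemma RectPath.ext_vert_zero (π : RectPath) (q : ℝ × ℝ) :
    (π.ext q).vert 0 = π.vert 0 := by
  have := π.ext_vert_castSucc q 0
  simpa using this

lemma RectPath.ext_last (π : RectPath) (q : ℝ × ℝ) : (π.ext q).last = q := by
  show Fin.snoc (α := fun _ => ℝ × ℝ) π.vert q (Fin.last (π.N + 1)) = q
  exact Fin.snoc_last _ _

lemma RectPath.ext_edge_castSucc (π : RectPath) (q : ℝ × ℝ) (j : Fin π.N) :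
    segment ℝ ((π.ext q).vert j.castSucc.castSucc) ((π.ext q).vert j.castSucc.succ)
      = segment ℝ (π.vert j.castSucc) (π.vert j.succ) := by
  rw [Fin.succ_castSucc, π.ext_vert_castSucc q j.castSucc, π.ext_vert_castSucc q j.succ]

lemma RectPath.ext_edge_last (π : RectPath) (q : ℝ × ℝ) :
    segment ℝ ((π.ext q).vert (Fin.last π.N).castSucc) ((π.ext q).vert (Fin.last π.N).succ)
      = segment ℝ π.last q := by
  rw [Fin.succ_last, π.ext_vert_castSucc q (Fin.last π.N)]
  show segment ℝ π.last (Fin.snoc (α := fun _ => ℝ × ℝ) π.vert q (Fin.last (π.N + 1))) = _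
  rw [Fin.snoc_last]

lemma RectPath.ext_image (π : RectPath) (q : ℝ × ℝ) :
    (π.ext q).image = π.image ∪ segment ℝ π.last q := by
  ext p
  constructor
  · intro hp
    rcases mem_insert_iff.mp hp with h0 | hp'
    · rw [π.ext_vert_zero q] at h0
      exact Or.inl (mem_insert_iff.mpr (Or.inl h0))
    · obtain ⟨k, hk⟩ := mem_iUnion.mp hp'
      have hk2 : ∃ k' : Fin (π.N + 1),
          p ∈ segment ℝ ((π.ext q).vert k'.castSucc) ((π.ext q).vert k'.succ) := ⟨k, hk⟩
      obtain ⟨k', hk'⟩ := hk2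
      induction k' using Fin.lastCases with
      | last => right; rwa [π.ext_edge_last q] at hk'
      | cast j =>
          left
          exact mem_insert_of_mem _ (mem_iUnion.mpr ⟨j, by rwa [π.ext_edge_castSucc q j] at hk'⟩)
  · intro hp
    rcases hp with hp | hp
    · rcases mem_insert_iff.mp hp with h0 | hp'
      · exact mem_insert_iff.mpr (Or.inl (by rw [π.ext_vert_zero q]; exact h0))
      · obtain ⟨j, hj⟩ := mem_iUnion.mp hp'
        refine mem_insert_of_mem _ (mem_iUnion.mpr ⟨(j.castSucc : Fin (π.N + 1)), ?_⟩)
        rwa [π.ext_edge_castSucc q j]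
    · refine mem_insert_of_mem _ (mem_iUnion.mpr ⟨(Fin.last π.N : Fin (π.N + 1)), ?_⟩)
      rwa [π.ext_edge_last q]

section Aux

variable {R B : ℝ → ℝ} {n m : ℕ} {δ : ℝ} {s : ℤ × ℤ}

lemma pm_mono {A : ℝ → ℝ} {i p q : ℤ} (hp : PrefixMin A i p) (hq : PrefixMin A i q)
    (hpq : p ≤ q) : |A (q : ℝ)| ≤ |A (p : ℝ)| :=
  hq.2 (p : ℝ) ⟨by exact_mod_cast hp.1, by exact_mod_cast hpq⟩

lemma mem_free_iff {p : ℝ × ℝ} :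
    p ∈ freeSpace R B n m δ ↔ p.1 ∈ Icc (1:ℝ) (n : ℝ) ∧ p.2 ∈ Icc (1:ℝ) (m : ℝ) ∧
      B p.2 - R p.1 ≤ δ := Iff.rfl

/-- If a vertical segment in column `x` is free, and `x'` is a later prefix-minimum,
then the same vertical segment in column `x'` is free. -/
lemma free_shift (hsepR : ∀ x ∈ Icc (1:ℝ) (n : ℝ), R x ≤ 0)
    {x x' : ℤ} (hp : PrefixMin R s.1 x) (hp' : PrefixMin R s.1 x') (hxx : x ≤ x')
    (hb1 : (1:ℝ) ≤ (x' : ℝ)) (hb2 : (x' : ℝ) ≤ (n : ℝ)) {y1 y2 : ℝ}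
    (hfree : ({(x : ℝ)} : Set ℝ) ×ˢ Icc y1 y2 ⊆ freeSpace R B n m δ) :
    ({(x' : ℝ)} : Set ℝ) ×ˢ Icc y1 y2 ⊆ freeSpace R B n m δ := by
  rintro ⟨p1, p2⟩ ⟨hp1, hp2⟩
  simp only [mem_singleton_iff] at hp1
  subst hp1
  have hx : ((x : ℝ), p2) ∈ freeSpace R B n m δ := hfree ⟨rfl, hp2⟩
  obtain ⟨hxn, hym, hfs⟩ := hx
  have habs : |R (x' : ℝ)| ≤ |R (x : ℝ)| := pm_mono hp hp' hxx
  have hRx : R (x : ℝ) ≤ 0 := hsepR _ hxn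
  have hRx' : R (x' : ℝ) ≤ 0 := hsepR _ ⟨hb1, hb2⟩
  rw [abs_of_nonpos hRx', abs_of_nonpos hRx] at habs
  exact ⟨⟨hb1, hb2⟩, hym, by linarith⟩

/-- Extract the prefix-minima property at a known integer vertex. -/
lemma vert_ints {π : RectPath} (hPM : IsPMMatching R B n m δ s π) (k : Fin (π.N + 1))
    {x h : ℤ} (hv : π.vert k = ((x : ℝ), (h : ℝ))) :
    PrefixMin R s.1 x ∧ PrefixMin B s.2 h := by
  obtain ⟨i0, j0, heq, h1, h2⟩ := hPM.2.2.2 k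
  rw [hv] at heq
  obtain ⟨rfl, rfl⟩ := pair_int_eq heq
  exact ⟨h1, h2⟩

lemma RectPath.ext_vert_last_castSucc (π : RectPath) (q : ℝ × ℝ) :
    (π.ext q).vert (Fin.last π.N).castSucc = π.last := π.ext_vert_castSucc q (Fin.last π.N)

lemma RectPath.ext_vert_last_succ (π : RectPath) (q : ℝ × ℝ) :
    (π.ext q).vert (Fin.last π.N).succ = q := by
  rw [Fin.succ_last]
  exact π.ext_last q

/-- The extended path is again a prefix-minima matching, provided the new edge is
axis-parallel monotone, free, and ends at a prefix-minima vertex. -/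
lemma ext_isPM {π : RectPath} (hPM : IsPMMatching R B n m δ s π) {xq hq : ℤ}
    (hrectq : (π.last.1 = ((xq : ℝ), (hq : ℝ)).1 ∧ π.last.2 < ((xq : ℝ), (hq : ℝ)).2) ∨
      (π.last.2 = ((xq : ℝ), (hq : ℝ)).2 ∧ π.last.1 < ((xq : ℝ), (hq : ℝ)).1))
    (hsegF : segment ℝ π.last ((xq : ℝ), (hq : ℝ)) ⊆ freeSpace R B n m δ)
    (hpmx : PrefixMin R s.1 xq) (hpmh : PrefixMin B s.2 hq) :
    IsPMMatching R B n m δ s (π.ext ((xq : ℝ), (hq : ℝ))) := by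
  obtain ⟨hrect, hv0, himF, hPMv⟩ := hPM
  set q : ℝ × ℝ := ((xq : ℝ), (hq : ℝ))
  refine ⟨?_, ?_, ?_, ?_⟩
  · intro k
    induction k using Fin.lastCases with
    | last =>
        rw [π.ext_vert_last_castSucc q, π.ext_vert_last_succ q]
        exact hrectq
    | cast j =>
        rw [Fin.succ_castSucc, π.ext_vert_castSucc q j.castSucc, π.ext_vert_castSucc q j.succ]
        exact hrect j
  · rw [π.ext_vert_zero q]; exact hv0
  · rw [π.ext_image q]
    exact union_subset himF hsegF
  · intro k
    induction k using Fin.lastCases with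
    | last => exact ⟨xq, hq, π.ext_last q, hpmx, hpmh⟩
    | cast j =>
        obtain ⟨i', j', he, p1, p2⟩ := hPMv j
        exact ⟨i', j', (π.ext_vert_castSucc q j).trans he, p1, p2⟩

/-- Extension contradiction, horizontal case. -/
lemma extend_horiz_false {π : RectPath} (hmax : IsMaximalHG R B n m δ s π)
    {x h imax : ℤ}
    (hlast : π.last = ((x : ℝ), (h : ℝ)))
    (hxi : x < imax)
    (hpmi : PrefixMin R s.1 imax) (hpmh : PrefixMin B s.2 h)
    (hfree : Icc (x : ℝ) (imax : ℝ) ×ˢ ({(h : ℝ)} : Set ℝ) ⊆ freeSpace R B n m δ)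
    (hub : ∀ i2 : ℤ, x < i2 → PrefixMin R s.1 i2 →
      Icc (x : ℝ) (i2 : ℝ) ×ˢ ({(h : ℝ)} : Set ℝ) ⊆ freeSpace R B n m δ → i2 ≤ imax) :
    False := by
  obtain ⟨⟨hPM, hgreedy⟩, hmaxi⟩ := hmax
  have hrect := hPM.1
  set q : ℝ × ℝ := ((imax : ℝ), (h : ℝ)) with hq
  have hxile : (x : ℝ) ≤ (imax : ℝ) := by exact_mod_cast hxi.le
  have hseg : segment ℝ π.last q = Icc (x : ℝ) (imax : ℝ) ×ˢ ({(h : ℝ)} : Set ℝ) := by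
    rw [hlast, hq, horiz_seg hxile]
  have himg : (π.ext q).image = π.image ∪ Icc (x : ℝ) (imax : ℝ) ×ˢ ({(h : ℝ)} : Set ℝ) := by
    rw [π.ext_image q, hseg]
  have hHG : IsHorizGreedy R B n m δ s (π.ext q) := by
    constructor
    · refine ext_isPM hPM ?_ ?_ hpmi hpmh
      · right
        rw [hlast]
        refine ⟨rfl, ?_⟩
        show (x : ℝ) < (imax : ℝ)
        exact_mod_cast hxi
      · rw [hseg]
        exact hfree
    · intro i' j' hmem hpi hpj ihat hltihat hpihat hfsub
      rw [himg] at hmem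
      have hcase2 : (x : ℝ) ≤ (i' : ℝ) → (i' : ℝ) ≤ (imax : ℝ) → j' = h →
          Icc (i' : ℝ) (ihat : ℝ) ×ˢ ({(j' : ℝ)} : Set ℝ) ⊆ (π.ext q).image := by
        intro hi1 hi2 hj
        rw [hj]
        rw [hj] at hfsub
        have hxi' : x ≤ i' := by exact_mod_cast hi1
        have hkey : Icc (x : ℝ) (ihat : ℝ) ×ˢ ({(h : ℝ)} : Set ℝ) ⊆ freeSpace R B n m δ := by
          rintro ⟨p1, p2⟩ ⟨hp1, hp2⟩
          rcases le_total p1 (i' : ℝ) with hcmp | hcmp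
          · exact hfree ⟨⟨hp1.1, le_trans hcmp hi2⟩, hp2⟩
          · exact hfsub ⟨⟨hcmp, hp1.2⟩, hp2⟩
        have hle : ihat ≤ imax := hub ihat (lt_of_le_of_lt hxi' hltihat) hpihat hkey
        rw [himg]
        rintro ⟨p1, p2⟩ ⟨hp1, hp2⟩
        exact Or.inr ⟨⟨le_trans hi1 hp1.1, le_trans hp1.2 (by exact_mod_cast hle)⟩, hp2⟩
      rcases hmem with hmem | hmem
      · rcases hgreedy i' j' hmem hpi hpj ihat hltihat hpihat hfsub with htr | hl
        · left; rw [himg]; exact htr.trans subset_union_left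
        · rw [hlast] at hl
          obtain ⟨hx', hh'⟩ := pair_int_eq hl
          left
          exact hcase2 (le_of_eq (by rw [hx'])) (by rw [← hx']; exact hxile) hh'.symm
      · obtain ⟨hp1, hp2⟩ := hmem
        simp only [mem_singleton_iff] at hp2
        left
        exact hcase2 hp1.1 hp1.2 (by exact_mod_cast hp2)
  have heqim := hmaxi (π.ext q) hHG (by rw [himg]; exact subset_union_left)
  have hqmem : q ∈ (π.ext q).image := by
    rw [π.ext_image q]; exact Or.inr (right_mem_segment ℝ _ _)
  rw [heqim] at hqmem
  have hle2 := RectPath.image_le_last hrect hqmem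
  rw [hlast] at hle2
  have hle3 : (imax : ℝ) ≤ (x : ℝ) := hle2.1
  have : imax ≤ x := by exact_mod_cast hle3
  omega

/-- Extension contradiction, vertical case. -/
lemma extend_vert_false {π : RectPath} (hmax : IsMaximalHG R B n m δ s π)
    {x h j1 : ℤ}
    (hlast : π.last = ((x : ℝ), (h : ℝ)))
    (hhj : h < j1)
    (hpmx : PrefixMin R s.1 x) (hpmj : PrefixMin B s.2 j1)
    (hfree : ({(x : ℝ)} : Set ℝ) ×ˢ Icc (h : ℝ) (j1 : ℝ) ⊆ freeSpace R B n m δ)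
    (hno : ∀ i2 : ℤ, x < i2 → PrefixMin R s.1 i2 →
      ¬ (Icc (x : ℝ) (i2 : ℝ) ×ˢ ({(h : ℝ)} : Set ℝ) ⊆ freeSpace R B n m δ))
    (hmin : ∀ j2 : ℤ, h < j2 → j2 < j1 → ¬ PrefixMin B s.2 j2) :
    False := by
  obtain ⟨⟨hPM, hgreedy⟩, hmaxi⟩ := hmax
  have hrect := hPM.1
  set q : ℝ × ℝ := ((x : ℝ), (j1 : ℝ)) with hq
  have hhjle : (h : ℝ) ≤ (j1 : ℝ) := by exact_mod_cast hhj.le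
  have hseg : segment ℝ π.last q = ({(x : ℝ)} : Set ℝ) ×ˢ Icc (h : ℝ) (j1 : ℝ) := by
    rw [hlast, hq, vert_seg hhjle]
  have himg : (π.ext q).image = π.image ∪ ({(x : ℝ)} : Set ℝ) ×ˢ Icc (h : ℝ) (j1 : ℝ) := by
    rw [π.ext_image q, hseg]
  have hHG : IsHorizGreedy R B n m δ s (π.ext q) := by
    constructor
    · refine ext_isPM hPM ?_ ?_ hpmx hpmj
      · left
        rw [hlast]
        refine ⟨rfl, ?_⟩
        show (h : ℝ) < (j1 : ℝ)
        exact_mod_cast hhj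
      · rw [hseg]
        exact hfree
    · intro i' j' hmem hpi hpj ihat hltihat hpihat hfsub
      rw [himg] at hmem
      -- helper: a point `(i', j')` with `i' = x`, `j' = h` is impossible together with the
      -- free horizontal segment
      have hnof : (i' : ℝ) = (x : ℝ) → (j' : ℝ) = (h : ℝ) → False := by
        intro hix hjh
        have hix' : i' = x := by exact_mod_cast hix
        have hjh' : j' = h := by exact_mod_cast hjh
        refine hno ihat (by omega) hpihat ?_
        rw [← hix', ← hjh']
        exact hfsub
      rcases hmem with hmem | hmem
      · rcases hgreedy i' j' hmem hpi hpj ihat hltihat hpihat hfsub with htr | hl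
        · left; rw [himg]; exact htr.trans subset_union_left
        · rw [hlast] at hl
          obtain ⟨hx', hh'⟩ := pair_int_eq hl
          exact (hnof (by rw [hx']) (by rw [hh'])).elim
      · obtain ⟨hp1, hp2⟩ := hmem
        simp only [mem_singleton_iff] at hp1
        have hp1' : (i' : ℝ) = (x : ℝ) := hp1
        have hp2' : (j' : ℝ) ∈ Icc (h : ℝ) (j1 : ℝ) := hp2
        have hj'1 : h ≤ j' := by exact_mod_cast hp2'.1
        have hj'2 : j' ≤ j1 := by exact_mod_cast hp2'.2
        rcases eq_or_lt_of_le hj'1 with heq | hlt1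
        · exact (hnof hp1' (by exact_mod_cast heq.symm)).elim
        rcases eq_or_lt_of_le hj'2 with heq2 | hlt2
        · right
          rw [π.ext_last q, hq, ← hp1', show (j1 : ℝ) = (j' : ℝ) by exact_mod_cast heq2.symm]
        · exact absurd hpj (hmin j' hlt1 hlt2)
  have heqim := hmaxi (π.ext q) hHG (by rw [himg]; exact subset_union_left)
  have hqmem : q ∈ (π.ext q).image := by
    rw [π.ext_image q]; exact Or.inr (right_mem_segment ℝ _ _)
  rw [heqim] at hqmem
  have hle2 := RectPath.image_le_last hrect hqmem
  rw [hlast] at hle2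
  have hle3 : (j1 : ℝ) ≤ (h : ℝ) := hle2.2
  have : j1 ≤ h := by exact_mod_cast hle3
  omega

lemma RectPath.edge_subset_image (π : RectPath) (k : Fin π.N) :
    segment ℝ (π.vert k.castSucc) (π.vert k.succ) ⊆ π.image :=
  fun _ hp => mem_insert_of_mem _ (mem_iUnion.2 ⟨k, hp⟩)

/-- If the maximal greedy path terminates strictly before column `a'` at height at most
`b`, with a free vertical segment up to height `b` and a free horizontal corridor at
height `b` up to column `a'`, we get a contradiction with maximality. -/
lemma stuck_false {π : RectPath} (hmax : IsMaximalHG R B n m δ s π)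
    {x h a' b : ℤ}
    (hlast : π.last = ((x : ℝ), (h : ℝ)))
    (hpmx : PrefixMin R s.1 x) (hpmh : PrefixMin B s.2 h)
    (hxa : x < a') (hpa' : PrefixMin R s.1 a') (hpb : PrefixMin B s.2 b)
    (hhb : h ≤ b)
    (hcol : ({(x : ℝ)} : Set ℝ) ×ˢ Icc (h : ℝ) (b : ℝ) ⊆ freeSpace R B n m δ)
    (hrow : Icc (x : ℝ) (a' : ℝ) ×ˢ ({(b : ℝ)} : Set ℝ) ⊆ freeSpace R B n m δ) :
    False := by
  by_cases hopt : ∃ i2 : ℤ, x < i2 ∧ PrefixMin R s.1 i2 ∧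
      Icc (x : ℝ) (i2 : ℝ) ×ˢ ({(h : ℝ)} : Set ℝ) ⊆ freeSpace R B n m δ
  · -- a horizontal extension exists: take the furthest one
    have hbdd : ∃ bd : ℤ, ∀ z : ℤ, (x < z ∧ PrefixMin R s.1 z ∧
        Icc (x : ℝ) (z : ℝ) ×ˢ ({(h : ℝ)} : Set ℝ) ⊆ freeSpace R B n m δ) → z ≤ bd := by
      refine ⟨(n : ℤ), fun z ⟨hz1, _, hz3⟩ => ?_⟩
      have : ((z : ℝ), (h : ℝ)) ∈ freeSpace R B n m δ :=
        hz3 ⟨⟨(by exact_mod_cast hz1.le : (x:ℝ) ≤ (z:ℝ)), le_refl _⟩, rfl⟩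
      have h2 : (z : ℝ) ≤ (n : ℝ) := this.1.2
      exact_mod_cast h2
    obtain ⟨imax, ⟨h1, h2, h3⟩, hub⟩ := Int.exists_greatest_of_bdd hbdd hopt
    exact extend_horiz_false hmax hlast h1 h2 hpmh h3
      (fun i2 u1 u2 u3 => hub i2 ⟨u1, u2, u3⟩)
  · push_neg at hopt
    have hno : ∀ i2 : ℤ, x < i2 → PrefixMin R s.1 i2 →
        ¬ (Icc (x : ℝ) (i2 : ℝ) ×ˢ ({(h : ℝ)} : Set ℝ) ⊆ freeSpace R B n m δ) := by
      intro i2 u1 u2 u3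
      exact (hopt i2 u1 u2) u3
    -- h < b, else the corridor itself is a horizontal extension
    have hhb' : h < b := by
      rcases eq_or_lt_of_le hhb with heq | hlt
      · exfalso
        refine hno a' hxa hpa' ?_
        rw [show ((h : ℝ)) = (b : ℝ) by exact_mod_cast heq]
        exact hrow
      · exact hlt
    -- take the least vertical extension
    have hbddb : ∃ bd : ℤ, ∀ z : ℤ, (h < z ∧ PrefixMin B s.2 z ∧
        ({(x : ℝ)} : Set ℝ) ×ˢ Icc (h : ℝ) (z : ℝ) ⊆ freeSpace R B n m δ) → bd ≤ z :=
      ⟨h, fun z ⟨hz1, _, _⟩ => hz1.le⟩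
    have hinh : ∃ z : ℤ, h < z ∧ PrefixMin B s.2 z ∧
        ({(x : ℝ)} : Set ℝ) ×ˢ Icc (h : ℝ) (z : ℝ) ⊆ freeSpace R B n m δ :=
      ⟨b, hhb', hpb, hcol⟩
    obtain ⟨j1, ⟨h1, h2, h3⟩, hlb⟩ := Int.exists_least_of_bdd hbddb hinh
    have hj1b : j1 ≤ b := hlb b ⟨hhb', hpb, hcol⟩
    refine extend_vert_false hmax hlast h1 hpmx h2 h3 hno ?_
    intro j2 u1 u2 u3
    have : j1 ≤ j2 := hlb j2 ⟨u1, u3, ?_⟩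
    · omega
    · refine subset_trans ?_ hcol
      refine prod_mono subset_rfl (Icc_subset_Icc_right ?_)
      have : (j2 : ℝ) ≤ (b : ℝ) := by exact_mod_cast (by omega : j2 ≤ b)
      exact this

/-- Walking along the maximal greedy path from vertex `k` (in column `x ∈ [a, a']`,
at height `h ≤ b`, with free vertical connection to height `b`), we eventually reach
column `a'` at some height `y' ≤ b` with a free vertical connection to `b`. -/
lemma walkV (hsepR : ∀ u ∈ Icc (1:ℝ) (n : ℝ), R u ≤ 0)
    {π : RectPath} (hmax : IsMaximalHG R B n m δ s π)
    {a a' b : ℤ} (haa : a < a')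
    (hpa' : PrefixMin R s.1 a') (hpb : PrefixMin B s.2 b)
    (hedge : Icc (a : ℝ) (a' : ℝ) ×ˢ ({(b : ℝ)} : Set ℝ) ⊆ freeSpace R B n m δ) :
    ∀ cnt : ℕ, ∀ k : Fin (π.N + 1), (k : ℕ) + cnt = π.N → ∀ x h : ℤ,
      π.vert k = ((x : ℝ), (h : ℝ)) → a ≤ x → x ≤ a' → h ≤ b →
      ({(x : ℝ)} : Set ℝ) ×ˢ Icc (h : ℝ) (b : ℝ) ⊆ freeSpace R B n m δ →
      ∃ y' : ℝ, y' ≤ (b : ℝ) ∧ (((a' : ℝ), y') : ℝ × ℝ) ∈ π.image ∧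
        ({(a' : ℝ)} : Set ℝ) ×ˢ Icc y' (b : ℝ) ⊆ freeSpace R B n m δ := by
  have hPM := hmax.1.1
  have hgreedy := hmax.1.2
  have haar : (a : ℝ) ≤ (a' : ℝ) := by exact_mod_cast haa.le
  intro cnt
  induction cnt with
  | zero =>
      intro k hk x h hv hax hxa hhb hcol
      have hkl : k = Fin.last π.N := Fin.ext (by simpa using hk)
      have hlast : π.last = ((x : ℝ), (h : ℝ)) := by
        rw [RectPath.last, ← hkl]; exact hv
      obtain ⟨hpmx, hpmh⟩ := vert_ints hPM k hv
      rcases eq_or_lt_of_le hxa with heq | hlt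
      · subst heq
        refine ⟨(h : ℝ), by exact_mod_cast hhb, ?_, hcol⟩
        have := π.last_mem_image
        rwa [hlast] at this
      · exact (stuck_false hmax hlast hpmx hpmh hlt hpa' hpb hhb hcol
          (subset_trans (prod_mono (Icc_subset_Icc_left (by exact_mod_cast hax)) subset_rfl)
            hedge)).elim
  | succ cnt ih =>
      intro k hk x h hv hax hxa hhb hcol
      obtain ⟨hpmx, hpmh⟩ := vert_ints hPM k hv
      have hklt : (k : ℕ) < π.N := by omega
      set kk : Fin π.N := ⟨(k : ℕ), hklt⟩ with hkk
      have hcs : kk.castSucc = k := Fin.ext rfl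
      have hksval : ((kk.succ : Fin (π.N + 1)) : ℕ) + cnt = π.N := by
        show (k : ℕ) + 1 + cnt = π.N
        have hkv : ((kk.castSucc : Fin (π.N + 1)) : ℕ) = (k : ℕ) := rfl
        omega
      obtain ⟨x2, h2, hv2, hpmx2, hpmh2⟩ := hPM.2.2.2 kk.succ
      -- bounds for x2 (it is in the free space)
      have hx2F : ((x2 : ℝ), (h2 : ℝ)) ∈ freeSpace R B n m δ := by
        have := hPM.2.2.1 (π.mem_image_vert kk.succ)
        rwa [hv2] at this
      rcases hPM.1 kk with ⟨he1, he2⟩ | ⟨he1, he2⟩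
      · -- vertical edge
        rw [hcs, hv, hv2] at he1 he2
        have he1' : (x : ℝ) = (x2 : ℝ) := he1
        have he2' : (h : ℝ) < (h2 : ℝ) := he2
        have hx2x : x2 = x := by exact_mod_cast he1'.symm
        subst hx2x
        rcases le_or_gt h2 b with hh2b | hbh2
        · -- still below b : continue from the upper vertex
          refine ih kk.succ hksval x2 h2 hv2 hax hxa hh2b ?_
          refine subset_trans (prod_mono subset_rfl (Icc_subset_Icc_left he2'.le)) hcol
        · -- the edge crosses height b
          rcases eq_or_lt_of_le hxa with heq | hlt
          · subst heq
            refine ⟨(h : ℝ), by exact_mod_cast hhb, ?_, hcol⟩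
            have := π.mem_image_vert k
            rwa [hv] at this
          · have hmemb : (((x2 : ℝ), (b : ℝ)) : ℝ × ℝ) ∈ π.image := by
              refine π.edge_subset_image kk ?_
              rw [hcs, hv, hv2, vert_seg (le_of_lt he2')]
              exact ⟨rfl, (by exact_mod_cast hhb : (h:ℝ) ≤ (b:ℝ)), le_of_lt (by exact_mod_cast hbh2 : (b:ℝ) < (h2:ℝ))⟩
            have hrowsub : Icc (x2 : ℝ) (a' : ℝ) ×ˢ ({(b : ℝ)} : Set ℝ) ⊆
                freeSpace R B n m δ :=
              subset_trans (prod_mono (Icc_subset_Icc_left (by exact_mod_cast hax))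
                subset_rfl) hedge
            rcases hgreedy x2 b hmemb hpmx hpb a' hlt hpa' hrowsub with htr | hl
            · refine ⟨(b : ℝ), le_refl _, htr ⟨⟨(by exact_mod_cast hxa : (x2:ℝ) ≤ (a':ℝ)), le_refl _⟩, rfl⟩, ?_⟩
              rintro ⟨p1, p2⟩ ⟨hp1, hp2⟩
              simp only [mem_singleton_iff] at hp1
              have hp2' : p2 = (b : ℝ) := le_antisymm hp2.2 hp2.1
              subst hp1; subst hp2'
              exact hedge ⟨⟨haar, le_refl _⟩, rfl⟩
            · exfalso
              have hmo : π.vert kk.succ ≤ π.vert (Fin.last π.N) :=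
                RectPath.vert_monotone hPM.1 (Fin.le_last kk.succ)
              rw [hv2, show π.vert (Fin.last π.N) = ((x2 : ℝ), (b : ℝ)) from hl] at hmo
              have : (h2 : ℝ) ≤ (b : ℝ) := hmo.2
              have : h2 ≤ b := by exact_mod_cast this
              omega
      · -- horizontal edge
        rw [hcs, hv, hv2] at he1 he2
        have he1' : (h : ℝ) = (h2 : ℝ) := he1
        have he2' : (x : ℝ) < (x2 : ℝ) := he2
        have hh2h : h2 = h := by exact_mod_cast he1'.symm
        subst hh2h
        have hxx2 : x ≤ x2 := by exact_mod_cast he2'.le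
        rcases le_or_gt a' x2 with ha'x2 | hx2a'
        · -- the edge reaches column a'
          have hmem : (((a' : ℝ), (h2 : ℝ)) : ℝ × ℝ) ∈ π.image := by
            refine π.edge_subset_image kk ?_
            rw [hcs, hv, hv2, horiz_seg (le_of_lt he2')]
            exact ⟨⟨(by exact_mod_cast hxa : (x:ℝ) ≤ (a':ℝ)), (by exact_mod_cast ha'x2 : (a':ℝ) ≤ (x2:ℝ))⟩, rfl⟩
          have ha'F : ((a' : ℝ), (b : ℝ)) ∈ freeSpace R B n m δ :=
            hedge ⟨⟨haar, le_refl _⟩, rfl⟩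
          refine ⟨(h2 : ℝ), by exact_mod_cast hhb, hmem, ?_⟩
          exact free_shift hsepR hpmx hpa' (by exact_mod_cast hxa) ha'F.1.1 ha'F.1.2 hcol
        · -- continue from the right vertex
          refine ih kk.succ hksval x2 h2 hv2 (by omega : a ≤ x2) hx2a'.le hhb ?_
          exact free_shift hsepR hpmx hpmx2 hxx2 hx2F.1.1 hx2F.1.2 hcol

/-- Starting from any point of `π` in column `a` at height `y0 ≤ b` with a free vertical
connection up to `b`, the conclusion of the walk holds. -/
lemma walk_start (hsepR : ∀ u ∈ Icc (1:ℝ) (n : ℝ), R u ≤ 0)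
    {π : RectPath} (hmax : IsMaximalHG R B n m δ s π)
    {a a' b : ℤ} (haa : a < a')
    (hpa : PrefixMin R s.1 a) (hpa' : PrefixMin R s.1 a') (hpb : PrefixMin B s.2 b)
    (hedge : Icc (a : ℝ) (a' : ℝ) ×ˢ ({(b : ℝ)} : Set ℝ) ⊆ freeSpace R B n m δ)
    {y0 : ℝ} (hy0 : y0 ≤ (b : ℝ)) (hmem : (((a : ℝ), y0) : ℝ × ℝ) ∈ π.image)
    (hcol : ({(a : ℝ)} : Set ℝ) ×ˢ Icc y0 (b : ℝ) ⊆ freeSpace R B n m δ) :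
    ∃ y' : ℝ, y' ≤ (b : ℝ) ∧ (((a' : ℝ), y') : ℝ × ℝ) ∈ π.image ∧
      ({(a' : ℝ)} : Set ℝ) ×ˢ Icc y' (b : ℝ) ⊆ freeSpace R B n m δ := by
  have hPM := hmax.1.1
  have hgreedy := hmax.1.2
  have haar : (a : ℝ) ≤ (a' : ℝ) := by exact_mod_cast haa.le
  have ha'F : ((a' : ℝ), (b : ℝ)) ∈ freeSpace R B n m δ := hedge ⟨⟨haar, le_refl _⟩, rfl⟩
  rcases mem_insert_iff.mp hmem with hmem0 | hmem'
  · -- the point is the start vertex s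
    have hv0 := hPM.2.1
    rw [hv0] at hmem0
    have ha1 : (a : ℝ) = (s.1 : ℝ) := congrArg Prod.fst hmem0
    have hy1 : y0 = (s.2 : ℝ) := congrArg Prod.snd hmem0
    have has : a = s.1 := by exact_mod_cast ha1
    refine walkV hsepR hmax haa hpa' hpb hedge π.N 0 (by simp) a s.2 ?_ (le_refl _)
      haa.le ?_ ?_
    · rw [hv0, ← ha1]
    · have : (s.2 : ℝ) ≤ (b : ℝ) := by rw [← hy1]; exact hy0
      exact_mod_cast this
    · rw [← hy1]; exact hcol
  · obtain ⟨kE, hkE⟩ := mem_iUnion.1 hmem'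
    obtain ⟨x1, h1, hvc, hpmx1, hpmh1⟩ := hPM.2.2.2 kE.castSucc
    obtain ⟨x2, h2, hvs, hpmx2, hpmh2⟩ := hPM.2.2.2 kE.succ
    have hx2F : ((x2 : ℝ), (h2 : ℝ)) ∈ freeSpace R B n m δ := by
      have := hPM.2.2.1 (π.mem_image_vert kE.succ)
      rwa [hvs] at this
    have hcnt : ((kE.succ : Fin (π.N + 1)) : ℕ) + (π.N - ((kE : ℕ) + 1)) = π.N := by
      have := kE.isLt
      simp only [Fin.val_succ]
      omega
    rcases hPM.1 kE with ⟨he1, he2⟩ | ⟨he1, he2⟩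
    · -- on a vertical edge
      rw [hvc, hvs] at he1 he2
      have he1' : (x1 : ℝ) = (x2 : ℝ) := he1
      have he2' : (h1 : ℝ) < (h2 : ℝ) := he2
      have hx2x : x2 = x1 := by exact_mod_cast he1'.symm
      subst hx2x
      rw [hvc, hvs, vert_seg he2'.le] at hkE
      have hax1 : (a : ℝ) = (x2 : ℝ) := hkE.1
      have hax1' : a = x2 := by exact_mod_cast hax1
      have hy0mem : y0 ∈ Icc (h1 : ℝ) (h2 : ℝ) := hkE.2
      have hax2le : a ≤ x2 := le_of_eq hax1'
      have hx2a'le : x2 ≤ a' := by rw [← hax1']; exact haa.le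
      rcases le_or_gt h2 b with hh2b | hbh2
      · refine walkV hsepR hmax haa hpa' hpb hedge (π.N - ((kE : ℕ) + 1)) kE.succ hcnt
          x2 h2 hvs hax2le hx2a'le hh2b ?_
        rw [← hax1]
        exact subset_trans (prod_mono subset_rfl (Icc_subset_Icc_left hy0mem.2)) hcol
      · -- edge crosses height b : use greediness at (x2, b)
        have hpax2 : PrefixMin R s.1 x2 := by rw [← hax1']; exact hpa
        have hltx2 : x2 < a' := by rw [← hax1']; exact haa
        have hedge2 : Icc (x2 : ℝ) (a' : ℝ) ×ˢ ({(b : ℝ)} : Set ℝ) ⊆ freeSpace R B n m δ := by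
          rw [← hax1]; exact hedge
        have hmemb : (((x2 : ℝ), (b : ℝ)) : ℝ × ℝ) ∈ π.image := by
          refine π.edge_subset_image kE ?_
          rw [hvc, hvs, vert_seg he2'.le]
          exact ⟨rfl, le_trans hy0mem.1 hy0, le_of_lt (by exact_mod_cast hbh2 : (b:ℝ) < (h2:ℝ))⟩
        rcases hgreedy x2 b hmemb hpax2 hpb a' hltx2 hpa' hedge2 with htr | hl
        · refine ⟨(b : ℝ), le_refl _, htr ⟨⟨(by rw [← hax1]; exact haar), le_refl _⟩, rfl⟩, ?_⟩
          rintro ⟨p1, p2⟩ ⟨hp1, hp2⟩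
          simp only [mem_singleton_iff] at hp1
          have hp2' : p2 = (b : ℝ) := le_antisymm hp2.2 hp2.1
          subst hp1; subst hp2'
          exact ha'F
        · exfalso
          have hmo : π.vert kE.succ ≤ π.vert (Fin.last π.N) :=
            RectPath.vert_monotone hPM.1 (Fin.le_last kE.succ)
          rw [hvs, show π.vert (Fin.last π.N) = ((x2 : ℝ), (b : ℝ)) from hl] at hmo
          have h2b1 : (h2 : ℝ) ≤ (b : ℝ) := hmo.2
          have h2b2 : h2 ≤ b := by exact_mod_cast h2b1
          omega
    · -- on a horizontal edge
      rw [hvc, hvs] at he1 he2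
      have he1' : (h1 : ℝ) = (h2 : ℝ) := he1
      have he2' : (x1 : ℝ) < (x2 : ℝ) := he2
      have hh2h : h2 = h1 := by exact_mod_cast he1'.symm
      subst hh2h
      rw [hvc, hvs, horiz_seg he2'.le] at hkE
      have hy0h : y0 = (h2 : ℝ) := hkE.2
      have haIcc : (a : ℝ) ∈ Icc (x1 : ℝ) (x2 : ℝ) := hkE.1
      have hh1b : h2 ≤ b := by
        rw [hy0h] at hy0; exact_mod_cast hy0
      rcases le_or_gt a' x2 with ha'x2 | hx2a'
      · have hmem2 : (((a' : ℝ), (h2 : ℝ)) : ℝ × ℝ) ∈ π.image := by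
          refine π.edge_subset_image kE ?_
          rw [hvc, hvs, horiz_seg he2'.le]
          exact ⟨⟨le_trans haIcc.1 haar, (by exact_mod_cast ha'x2 : (a':ℝ) ≤ (x2:ℝ))⟩, rfl⟩
        refine ⟨(h2 : ℝ), by exact_mod_cast hh1b, hmem2, ?_⟩
        refine free_shift hsepR hpa hpa' haa.le ha'F.1.1 ha'F.1.2 ?_
        rw [← hy0h]
        exact hcol
      · refine walkV hsepR hmax haa hpa' hpb hedge (π.N - ((kE : ℕ) + 1)) kE.succ hcnt
          x2 h2 hvs ?_ hx2a'.le hh1b ?_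
        · have : (a : ℝ) ≤ (x2 : ℝ) := haIcc.2
          exact_mod_cast this
        · refine free_shift hsepR hpa hpmx2 (by exact_mod_cast haIcc.2) hx2F.1.1 hx2F.1.2 ?_
          rw [← hy0h]
          exact hcol

end Aux

/-- If `t = (i', j')` is the endpoint of some prefix-minima
`δ`-matching starting at `s`, and `π` is a maximal horizontal-greedy
`δ`-matching starting at `s`, then `π` passes through a point `t̂ = (i', ĵ)`
vertically below `t` such that the vertical segment `{i'} × [ĵ, j']` lies in the
`δ`-free space. -/
theorem lower_envelope
    (n m : ℕ) (hn : 1 ≤ n) (hm : 1 ≤ m)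
    (R B : ℝ → ℝ) (hR : IsPoly1D R n) (hB : IsPoly1D B m)
    (hsepR : ∀ x ∈ Icc (1:ℝ) (n : ℝ), R x ≤ 0)
    (hsepB : ∀ y ∈ Icc (1:ℝ) (m : ℝ), 0 ≤ B y)
    (hgpR : GeneralPosition R n) (hgpB : GeneralPosition B m)
    (δ : ℝ) (hδ : 0 ≤ δ)
    (s t : ℤ × ℤ) (hs : ((s.1 : ℝ), (s.2 : ℝ)) ∈ freeSpace R B n m δ)
    (hT : ∃ σ : RectPath, IsPMMatching R B n m δ s σ ∧
      σ.last = ((t.1 : ℝ), (t.2 : ℝ)))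
    (π : RectPath) (hπ : IsMaximalHG R B n m δ s π) :
    ∃ jhat : ℝ, jhat ≤ (t.2 : ℝ) ∧ ((t.1 : ℝ), jhat) ∈ π.image ∧
      ({((t.1 : ℝ))} : Set ℝ) ×ˢ Icc jhat (t.2 : ℝ) ⊆ freeSpace R B n m δ := by
  obtain ⟨σ, hσPM, hσlast⟩ := hT
  have hπPM := hπ.1.1
  have key : ∀ k : Fin (σ.N + 1), ∀ a b : ℤ, σ.vert k = ((a : ℝ), (b : ℝ)) →
      ∃ y : ℝ, y ≤ (b : ℝ) ∧ (((a : ℝ), y) : ℝ × ℝ) ∈ π.image ∧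
        ({(a : ℝ)} : Set ℝ) ×ˢ Icc y (b : ℝ) ⊆ freeSpace R B n m δ := by
    intro k
    induction k using Fin.induction with
    | zero =>
        intro a b hv
        have hsab := (hσPM.2.1.symm.trans hv)
        obtain ⟨ha, hb⟩ := pair_int_eq hsab
        subst ha; subst hb
        refine ⟨(s.2 : ℝ), le_refl _, ?_, ?_⟩
        · rw [← hπPM.2.1]; exact π.mem_image_vert 0
        · rintro ⟨p1, p2⟩ ⟨hp1, hp2⟩
          simp only [mem_singleton_iff] at hp1
          have hp2' : p2 = (s.2 : ℝ) := le_antisymm hp2.2 hp2.1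
          subst hp1; subst hp2'
          exact hs
    | succ i ihp =>
        intro a2 b2 hv2
        obtain ⟨a1, b1, hv1, hpa1, hpb1⟩ := hσPM.2.2.2 i.castSucc
        obtain ⟨y, hy, hymem, hycol⟩ := ihp a1 b1 hv1
        obtain ⟨hpa2, hpb2⟩ := vert_ints hσPM i.succ hv2
        rcases hσPM.1 i with ⟨he1, he2⟩ | ⟨he1, he2⟩
        · -- vertical edge of σ
          rw [hv1, hv2] at he1 he2
          have he1' : (a1 : ℝ) = (a2 : ℝ) := he1
          have he2' : (b1 : ℝ) < (b2 : ℝ) := he2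
          have hmem2 : (((a2 : ℝ), y) : ℝ × ℝ) ∈ π.image := by
            rw [show (a2 : ℝ) = (a1 : ℝ) from he1'.symm]; exact hymem
          refine ⟨y, le_trans hy he2'.le, hmem2, ?_⟩
          rw [show (a2 : ℝ) = (a1 : ℝ) from he1'.symm]
          rintro ⟨p1, p2⟩ ⟨hp1, hp2⟩
          simp only [mem_singleton_iff] at hp1
          subst hp1
          rcases le_total p2 (b1 : ℝ) with hc | hc
          · exact hycol ⟨rfl, hp2.1, hc⟩
          · refine hσPM.2.2.1 (σ.edge_subset_image i ?_)
            rw [hv1, hv2, ← he1', vert_seg he2'.le]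
            exact ⟨rfl, hc, hp2.2⟩
        · -- horizontal edge of σ
          rw [hv1, hv2] at he1 he2
          have he1' : (b1 : ℝ) = (b2 : ℝ) := he1
          have he2' : (a1 : ℝ) < (a2 : ℝ) := he2
          have haa12 : a1 < a2 := by exact_mod_cast he2'
          have hedge : Icc (a1 : ℝ) (a2 : ℝ) ×ˢ ({(b2 : ℝ)} : Set ℝ) ⊆
              freeSpace R B n m δ := by
            intro p hp
            refine hσPM.2.2.1 (σ.edge_subset_image i ?_)
            rw [hv1, hv2, he1', horiz_seg he2'.le]
            exact hp
          have hycol2 : ({(a1 : ℝ)} : Set ℝ) ×ˢ Icc y (b2 : ℝ) ⊆ freeSpace R B n m δ := by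
            rw [← he1']; exact hycol
          exact walk_start hsepR hπ haa12 hpa1 hpa2 hpb2 hedge
            (le_trans hy he1'.le) hymem hycol2
  exact key (Fin.last σ.N) t.1 t.2 hσlast
end
end
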